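/- arXiv:1803.02513 — 5 statements merged into one kernel-verified Lean document; each statement's English description precedes it below -/
import Mathlib

section
/- Let f and g be continuous functions on (0,∞) with g(t) > 0 for all t > 0, let μ be a positive, differentiable, strictly increasing function mapping (0,∞) onto (μ(0⁺),∞), and suppose F(x) = ∫_0^∞ f(t)·e^{−x·μ(t)} dt and G(x) = ∫_0^∞ g(t)·e^{−x·μ(t)} dt converge for every x > 0. Suppose there exists t* ∈ (0,∞) such that f/g is strictly increasing on (0,t*) and strictly decreasing on (t*,∞), and suppose lim_{x→0⁺} ( (F′(x)/G′(x))·G(x) − F(x) ) exists and is negative. Then there exists x* > 0 such that F/G is increasing on (0,x*) and decreasing on (x*,∞). -/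
open Real Filter Set MeasureTheory Topology

theorem lap_deriv (h μ : ℝ → ℝ)
    (hmeas : AEStronglyMeasurable h (volume.restrict (Ioi 0)))
    (hμmeas : AEStronglyMeasurable μ (volume.restrict (Ioi 0)))
    (hμpos : ∀ t ∈ Ioi (0 : ℝ), 0 < μ t)
    (hint : ∀ x > (0 : ℝ), IntegrableOn (fun t => h t * Real.exp (-x * μ t)) (Ioi 0))
    (x0 : ℝ) (hx0 : 0 < x0) :
    IntegrableOn (fun t => h t * μ t * Real.exp (-x0 * μ t)) (Ioi 0) ∧
    HasDerivAt (fun x => ∫ t in Ioi (0:ℝ), h t * Real.exp (-x * μ t))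
      (∫ t in Ioi (0:ℝ), -(h t * μ t * Real.exp (-x0 * μ t))) x0 := by
  set ε := x0/4 with hε
  have hεpos : 0 < ε := by positivity
  have hmeasx : ∀ x : ℝ, AEStronglyMeasurable (fun t => h t * Real.exp (-x * μ t))
      (volume.restrict (Ioi 0)) := fun x =>
    hmeas.mul (Real.continuous_exp.comp_aestronglyMeasurable (hμmeas.const_mul (-x)))
  have hmeasx' : ∀ x : ℝ, AEStronglyMeasurable (fun t => -(h t * μ t * Real.exp (-x * μ t)))
      (volume.restrict (Ioi 0)) := fun x =>
    ((hmeas.mul hμmeas).mul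
      (Real.continuous_exp.comp_aestronglyMeasurable (hμmeas.const_mul (-x)))).neg
  have bint : Integrable (fun t => (4/x0) * (|h t| * Real.exp (-(x0/2) * μ t)))
      (volume.restrict (Ioi 0)) := by
    have := (hint (x0/2) (by positivity)).abs
    refine (this.congr ?_).const_mul _
    filter_upwards [] with t
    rw [abs_mul, abs_of_pos (Real.exp_pos _)]
  have key := hasDerivAt_integral_of_dominated_loc_of_deriv_le (μ := volume.restrict (Ioi 0))
    (F := fun x t => h t * Real.exp (-x * μ t))
    (F' := fun x t => -(h t * μ t * Real.exp (-x * μ t)))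
    (bound := fun t => (4/x0) * (|h t| * Real.exp (-(x0/2) * μ t)))
    (x₀ := x0) (Metric.ball_mem_nhds x0 hεpos) (Eventually.of_forall hmeasx) (hint x0 hx0) (hmeasx' x0) ?_ bint ?_
  · refine ⟨?_, key.2⟩
    have := key.1.neg
    exact this.congr (Eventually.of_forall fun t => by simp)
  · -- the bound
    rw [ae_restrict_iff' measurableSet_Ioi]
    filter_upwards [] with t ht x hx
    have hμt := hμpos t ht
    have hx' : x0 - ε < x := by
      have := abs_lt.1 (mem_ball_iff_norm.1 hx); linarith [this.1]
    have h1 : Real.exp (-x * μ t) ≤ Real.exp (-(3*x0/4) * μ t) := by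
      apply Real.exp_le_exp.2
      have : (3*x0/4) ≤ x := by rw [hε] at hx'; linarith
      nlinarith
    have h2 : μ t * Real.exp (-(x0/4) * μ t) ≤ 4/x0 := by
      have hb : (x0/4) * μ t ≤ Real.exp ((x0/4) * μ t) := by
        have := Real.add_one_le_exp ((x0/4) * μ t); linarith
      have hepos := Real.exp_pos ((x0/4) * μ t)
      have h3 : Real.exp ((x0/4) * μ t) * (Real.exp ((x0/4) * μ t))⁻¹ = 1 :=
        mul_inv_cancel₀ (ne_of_gt hepos)
      have h4 : (x0/4 * μ t) * (Real.exp ((x0/4) * μ t))⁻¹ ≤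
          Real.exp ((x0/4) * μ t) * (Real.exp ((x0/4) * μ t))⁻¹ :=
        mul_le_mul_of_nonneg_right hb (inv_pos.2 hepos).le
      rw [show -(x0/4) * μ t = -((x0/4) * μ t) by ring, Real.exp_neg,
        le_div_iff₀ hx0]
      nlinarith [inv_pos.2 hepos]
    calc ‖-(h t * μ t * Real.exp (-x * μ t))‖
        = |h t| * (μ t * Real.exp (-x * μ t)) := by
          rw [norm_neg, Real.norm_eq_abs, abs_mul, abs_mul, abs_of_pos hμt,
            abs_of_pos (Real.exp_pos _), mul_assoc]
      _ ≤ |h t| * (μ t * Real.exp (-(3*x0/4) * μ t)) := by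
          apply mul_le_mul_of_nonneg_left _ (abs_nonneg _)
          exact mul_le_mul_of_nonneg_left h1 hμt.le
      _ = (μ t * Real.exp (-(x0/4) * μ t)) * (|h t| * Real.exp (-(x0/2) * μ t)) := by
          rw [show (-(3*x0/4) * μ t) = (-(x0/4) * μ t) + (-(x0/2) * μ t) by ring,
            Real.exp_add]; ring
      _ ≤ (4/x0) * (|h t| * Real.exp (-(x0/2) * μ t)) := by
          apply mul_le_mul_of_nonneg_right h2 (by positivity)
  · -- differentiability
    filter_upwards [] with t x _
    have h1 : HasDerivAt (fun x : ℝ => -x * μ t) (-μ t) x := by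
      simpa using (hasDerivAt_mul_const (-μ t) : HasDerivAt (fun x : ℝ => x * -μ t) (-μ t) x)
    have := (h1.exp).const_mul (h t)
    refine this.congr_deriv ?_
    ring

theorem lap_pos (h μ : ℝ → ℝ)
    (hc : ContinuousOn h (Ioi 0)) (hpos : ∀ t ∈ Ioi (0:ℝ), 0 < h t)
    (hint : IntegrableOn (fun t => h t * Real.exp (-x * μ t)) (Ioi 0)) :
    0 < ∫ t in Ioi (0:ℝ), h t * Real.exp (-x * μ t) := by
  rw [MeasureTheory.setIntegral_pos_iff_support_of_nonneg_ae]
  · have hsub : Ioi (0:ℝ) ⊆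
        (Function.support fun t => h t * Real.exp (-x * μ t)) ∩ Ioi 0 := by
      intro t ht
      refine ⟨?_, ht⟩
      have h1 := hpos t ht
      have h2 := Real.exp_pos (-x * μ t)
      simp only [Function.mem_support]
      positivity
    calc (0:ENNReal) < volume (Ioi (0:ℝ)) := by rw [Real.volume_Ioi]; exact ENNReal.zero_lt_top
      _ ≤ _ := measure_mono hsub
  · rw [EventuallyLE, ae_restrict_iff' measurableSet_Ioi]
    filter_upwards [] with t ht
    have h1 := hpos t ht
    have h2 := Real.exp_pos (-x * μ t)
    have : (0:ℝ) ≤ h t * Real.exp (-x * μ t) := by positivity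
    simpa using this
  · exact hint

theorem lap_mono (θ μ : ℝ → ℝ)
    (hmeas : AEStronglyMeasurable θ (volume.restrict (Ioi 0)))
    (hμmeas : AEStronglyMeasurable μ (volume.restrict (Ioi 0)))
    (hμpos : ∀ t ∈ Ioi (0 : ℝ), 0 < μ t)
    (hint : ∀ x > (0 : ℝ), IntegrableOn (fun t => θ t * Real.exp (-x * μ t)) (Ioi 0))
    (α : ℝ)
    (hs1 : ∀ t ∈ Ioi (0:ℝ), μ t < α → 0 ≤ θ t)
    (hs2 : ∀ t ∈ Ioi (0:ℝ), α < μ t → θ t ≤ 0) :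
    MonotoneOn (fun x => Real.exp (x*α) * ∫ t in Ioi (0:ℝ), θ t * Real.exp (-x * μ t))
      (Ioi 0) := by
  have hD : ∀ x ∈ Ioi (0:ℝ), HasDerivAt
      (fun x => Real.exp (x*α) * ∫ t in Ioi (0:ℝ), θ t * Real.exp (-x * μ t))
      (Real.exp (x*α) * ∫ t in Ioi (0:ℝ), θ t * (α - μ t) * Real.exp (-x * μ t)) x := by
    intro x hx
    obtain ⟨hint2, hd⟩ := lap_deriv θ μ hmeas hμmeas hμpos hint x hx
    have he : HasDerivAt (fun x : ℝ => Real.exp (x*α)) (Real.exp (x*α) * α) x :=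
      (hasDerivAt_mul_const α).exp
    have := he.mul hd
    refine this.congr_deriv ?_
    have hsplit : ∀ t, θ t * (α - μ t) * Real.exp (-x * μ t) =
        α * (θ t * Real.exp (-x * μ t)) - θ t * μ t * Real.exp (-x * μ t) := by
      intro t; ring
    rw [show (fun t => θ t * (α - μ t) * Real.exp (-x * μ t)) =
        (fun t => α * (θ t * Real.exp (-x * μ t)) - θ t * μ t * Real.exp (-x * μ t)) from
        funext hsplit]
    rw [integral_sub ((hint x hx).const_mul α) hint2, MeasureTheory.integral_const_mul, integral_neg]
    ring
  apply monotoneOn_of_deriv_nonneg (convex_Ioi 0)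
  · intro x hx
    exact ((hD x hx).continuousAt).continuousWithinAt
  · intro x hx
    rw [interior_Ioi] at hx
    exact ⟨_, (hD x hx).hasDerivWithinAt⟩
  · intro x hx
    rw [interior_Ioi] at hx
    rw [(hD x hx).deriv]
    have : 0 ≤ ∫ t in Ioi (0:ℝ), θ t * (α - μ t) * Real.exp (-x * μ t) := by
      apply setIntegral_nonneg measurableSet_Ioi
      intro t ht
      have hexp := Real.exp_pos (-x * μ t)
      rcases lt_trichotomy (μ t) α with h | h | h
      · have h1 := hs1 t ht h
        have : (0:ℝ) ≤ α - μ t := by linarith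
        positivity
      · simp [h]
      · have h1 := hs2 t ht h
        have h2 : α - μ t ≤ 0 := by linarith
        have h3 : 0 ≤ θ t * (α - μ t) := by nlinarith
        have := mul_nonneg h3 hexp.le
        linarith [this]
    positivity

theorem lap_tilt_deriv (θ μ : ℝ → ℝ)
    (hmeas : AEStronglyMeasurable θ (volume.restrict (Ioi 0)))
    (hμmeas : AEStronglyMeasurable μ (volume.restrict (Ioi 0)))
    (hμpos : ∀ t ∈ Ioi (0 : ℝ), 0 < μ t)
    (hint : ∀ x > (0 : ℝ), IntegrableOn (fun t => θ t * Real.exp (-x * μ t)) (Ioi 0))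
    (β x : ℝ) (hx : 0 < x) :
    HasDerivAt (fun x => Real.exp (x*β) * ∫ t in Ioi (0:ℝ), θ t * Real.exp (-x * μ t))
      (Real.exp (x*β) * ∫ t in Ioi (0:ℝ), θ t * (β - μ t) * Real.exp (-x * μ t)) x := by
  obtain ⟨hint2, hd⟩ := lap_deriv θ μ hmeas hμmeas hμpos hint x hx
  have he : HasDerivAt (fun x : ℝ => Real.exp (x*β)) (Real.exp (x*β) * β) x :=
    (hasDerivAt_mul_const β).exp
  have := he.mul hd
  refine this.congr_deriv ?_
  have hsplit : ∀ t, θ t * (β - μ t) * Real.exp (-x * μ t) =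
      β * (θ t * Real.exp (-x * μ t)) - θ t * μ t * Real.exp (-x * μ t) := by
    intro t; ring
  rw [show (fun t => θ t * (β - μ t) * Real.exp (-x * μ t)) =
      (fun t => β * (θ t * Real.exp (-x * μ t)) - θ t * μ t * Real.exp (-x * μ t)) from
      funext hsplit]
  rw [integral_sub ((hint x hx).const_mul β) hint2, MeasureTheory.integral_const_mul, integral_neg]
  ring

theorem lap_unimodal_pos (θ μ : ℝ → ℝ)
    (hmeas : AEStronglyMeasurable θ (volume.restrict (Ioi 0)))
    (hμmeas : AEStronglyMeasurable μ (volume.restrict (Ioi 0)))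
    (hμpos : ∀ t ∈ Ioi (0 : ℝ), 0 < μ t)
    (hint : ∀ x > (0 : ℝ), IntegrableOn (fun t => θ t * Real.exp (-x * μ t)) (Ioi 0))
    (α β : ℝ) (hαβ : α ≤ β)
    (hs1 : ∀ t ∈ Ioi (0:ℝ), μ t < α → θ t ≤ 0)
    (hs2 : ∀ t ∈ Ioi (0:ℝ), α < μ t → μ t < β → 0 ≤ θ t)
    (hs3 : ∀ t ∈ Ioi (0:ℝ), β < μ t → θ t ≤ 0)
    (x y z : ℝ) (hx : 0 < x) (hxy : x < y) (hyz : y < z)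
    (hTx : 0 < ∫ t in Ioi (0:ℝ), θ t * Real.exp (-x * μ t))
    (hTz : 0 < ∫ t in Ioi (0:ℝ), θ t * Real.exp (-z * μ t)) :
    0 < ∫ t in Ioi (0:ℝ), θ t * Real.exp (-y * μ t) := by
  by_contra hTy
  push_neg at hTy
  set χ : ℝ → ℝ := fun w => ∫ t in Ioi (0:ℝ), θ t * (β - μ t) * Real.exp (-w * μ t) with hχ
  -- the auxiliary density
  set θ' : ℝ → ℝ := fun t => -(θ t * (β - μ t)) with hθ'
  have hmeas' : AEStronglyMeasurable θ' (volume.restrict (Ioi 0)) :=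
    (hmeas.mul ((aestronglyMeasurable_const.sub hμmeas))).neg
  have hint' : ∀ w > (0:ℝ), IntegrableOn (fun t => θ' t * Real.exp (-w * μ t)) (Ioi 0) := by
    intro w hw
    have h1 := (lap_deriv θ μ hmeas hμmeas hμpos hint w hw).1
    have h2 := (hint w hw).const_mul β
    refine (h1.sub h2).congr ?_
    filter_upwards [] with t
    simp only [Pi.sub_apply, hθ']; ring_nf
  have M := lap_mono θ' μ hmeas' hμmeas hμpos hint' α
    (fun t ht h => by
      have h1 := hs1 t ht h
      have h2 : 0 < β - μ t := by linarith
      simp only [hθ']; nlinarith)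
    (fun t ht h => by
      rcases lt_trichotomy (μ t) β with h' | h' | h'
      · have h1 := hs2 t ht h h'
        have h2 : 0 < β - μ t := by linarith
        simp only [hθ']; nlinarith
      · simp [hθ', h']
      · have h1 := hs3 t ht h'
        have h2 : β - μ t < 0 := by linarith
        simp only [hθ']; nlinarith)
  have hTχ : ∀ w, (∫ t in Ioi (0:ℝ), θ' t * Real.exp (-w * μ t)) = -χ w := by
    intro w
    rw [hχ, ← integral_neg]
    congr 1 with t
    simp only [hθ']; ring
  -- ψ and its derivative
  have hψd : ∀ w ∈ Ioi (0:ℝ), HasDerivAt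
      (fun w => Real.exp (w*β) * ∫ t in Ioi (0:ℝ), θ t * Real.exp (-w * μ t))
      (Real.exp (w*β) * χ w) w := fun w hw =>
    lap_tilt_deriv θ μ hmeas hμmeas hμpos hint β w hw
  set ψ : ℝ → ℝ := fun w => Real.exp (w*β) * ∫ t in Ioi (0:ℝ), θ t * Real.exp (-w * μ t) with hψ
  have hψx : 0 < ψ x := mul_pos (Real.exp_pos _) hTx
  have hψz : 0 < ψ z := mul_pos (Real.exp_pos _) hTz
  have hψy : ψ y ≤ 0 := mul_nonpos_of_nonneg_of_nonpos (Real.exp_pos _).le hTy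
  have hy : (0:ℝ) < y := lt_trans hx hxy
  have hcont : ∀ w ∈ Ioi (0:ℝ), ContinuousAt ψ w := fun w hw => (hψd w hw).continuousAt
  -- MVT on [x,y]
  obtain ⟨u, hu, hu'⟩ := exists_hasDerivAt_eq_slope ψ (fun w => Real.exp (w*β) * χ w) hxy
    (fun w hw => (hcont w (lt_of_lt_of_le hx hw.1)).continuousWithinAt)
    (fun w hw => hψd w (lt_trans hx hw.1))
  obtain ⟨v, hv, hv'⟩ := exists_hasDerivAt_eq_slope ψ (fun w => Real.exp (w*β) * χ w) hyz
    (fun w hw => (hcont w (lt_of_lt_of_le hy hw.1)).continuousWithinAt)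
    (fun w hw => hψd w (lt_trans hy hw.1))
  have hχu : χ u < 0 := by
    have hslope : (ψ y - ψ x) / (y - x) < 0 :=
      div_neg_of_neg_of_pos (by linarith) (by linarith)
    rw [← hu'] at hslope
    nlinarith [Real.exp_pos (u*β)]
  have hχv : 0 < χ v := by
    have hslope : 0 < (ψ z - ψ y) / (z - y) :=
      div_pos (by linarith) (by linarith)
    rw [← hv'] at hslope
    nlinarith [Real.exp_pos (v*β)]
  have huv : u ≤ v := le_of_lt (lt_trans hu.2 hv.1)
  have hu0 : u ∈ Ioi (0:ℝ) := lt_trans hx hu.1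
  have hv0 : v ∈ Ioi (0:ℝ) := lt_trans hy hv.1
  have hM := M hu0 hv0 huv
  simp only [hTχ u, hTχ v] at hM
  nlinarith [Real.exp_pos (u*α), Real.exp_pos (v*α)]

theorem lap_zero (θ μ : ℝ → ℝ)
    (hmeas : AEStronglyMeasurable θ (volume.restrict (Ioi 0)))
    (hμmeas : AEStronglyMeasurable μ (volume.restrict (Ioi 0)))
    (hμpos : ∀ t ∈ Ioi (0 : ℝ), 0 < μ t)
    (hint : ∀ x > (0 : ℝ), IntegrableOn (fun t => θ t * Real.exp (-x * μ t)) (Ioi 0)) :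
    Tendsto (fun x => ∫ t in Ioi (0:ℝ), θ t * Real.exp (-x * μ t)) atTop (𝓝 0) := by
  have key : Tendsto (fun x => ∫ t in Ioi (0:ℝ), θ t * Real.exp (-x * μ t)) atTop
      (𝓝 (∫ _t in Ioi (0:ℝ), (0:ℝ))) := by
    apply tendsto_integral_filter_of_dominated_convergence
      (fun t => |θ t| * Real.exp (-1 * μ t))
    · filter_upwards [] with x
      exact hmeas.mul (Real.continuous_exp.comp_aestronglyMeasurable (hμmeas.const_mul (-x)))
    · filter_upwards [eventually_ge_atTop (1:ℝ)] with x hx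
      rw [ae_restrict_iff' measurableSet_Ioi]
      filter_upwards [] with t ht
      have hμt := hμpos t ht
      rw [Real.norm_eq_abs, abs_mul, abs_of_pos (Real.exp_pos _)]
      apply mul_le_mul_of_nonneg_left _ (abs_nonneg _)
      apply Real.exp_le_exp.2
      nlinarith
    · exact ((hint 1 one_pos).abs).congr (by
        filter_upwards [] with t
        rw [abs_mul, abs_of_pos (Real.exp_pos _)])
    · rw [ae_restrict_iff' measurableSet_Ioi]
      filter_upwards [] with t ht
      have hμt := hμpos t ht
      have h1 : Tendsto (fun x : ℝ => -x * μ t) atTop atBot := by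
        have := (tendsto_id (α := ℝ)).atTop_mul_const hμt
        have h2 := tendsto_neg_atTop_atBot.comp this
        exact Tendsto.congr (fun x => by simp [Function.comp, neg_mul]) h2
      have h2 := Real.tendsto_exp_atBot.comp h1
      have := h2.const_mul (θ t)
      simpa using this
  simpa using key

theorem lap_ev_neg (θ μ : ℝ → ℝ)
    (hmeas : AEStronglyMeasurable θ (volume.restrict (Ioi 0)))
    (hμmeas : AEStronglyMeasurable μ (volume.restrict (Ioi 0)))
    (hμpos : ∀ t ∈ Ioi (0 : ℝ), 0 < μ t)
    (hμmono : StrictMonoOn μ (Ioi 0))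
    (hint : ∀ x > (0 : ℝ), IntegrableOn (fun t => θ t * Real.exp (-x * μ t)) (Ioi 0))
    (a b t0 ε : ℝ) (ha : 0 < a) (hab : a < b) (hbt0 : b < t0) (hε : 0 < ε)
    (hneg : ∀ t ∈ Ioc (0:ℝ) t0, θ t ≤ 0)
    (hbox : ∀ t ∈ Icc a b, θ t ≤ -ε) :
    ∀ᶠ x in atTop, (∫ t in Ioi (0:ℝ), θ t * Real.exp (-x * μ t)) < 0 := by
  have hb : (0:ℝ) < b := lt_trans ha hab
  have ht0 : (0:ℝ) < t0 := lt_trans hb hbt0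
  have hμbt : μ b < μ t0 := hμmono hb ht0 hbt0
  set C : ℝ := ∫ t in Ioi t0, |θ t| * Real.exp (-1 * μ t) with hC
  have habs1 : IntegrableOn (fun t => |θ t| * Real.exp (-1 * μ t)) (Ioi 0) :=
    ((hint 1 one_pos).abs).congr (by
      filter_upwards [] with t
      rw [abs_mul, abs_of_pos (Real.exp_pos _)])
  have hCnn : 0 ≤ C :=
    setIntegral_nonneg measurableSet_Ioi
      (fun t _ => mul_nonneg (abs_nonneg _) (Real.exp_pos _).le)
  have hev : ∀ᶠ x in atTop,
      C * Real.exp (μ t0) * Real.exp (x * (μ b - μ t0)) < ε * (b - a) := by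
    have h1 : Tendsto (fun x : ℝ => x * (μ b - μ t0)) atTop atBot :=
      tendsto_id.atTop_mul_const_of_neg (by linarith)
    have h2 := (Real.tendsto_exp_atBot.comp h1).const_mul (C * Real.exp (μ t0))
    simp only [mul_zero] at h2
    have := h2.eventually_lt_const (mul_pos hε (by linarith : (0:ℝ) < b - a))
    simpa [Function.comp] using this
  filter_upwards [hev, eventually_ge_atTop (1:ℝ)] with x hx hx1
  have hxpos : (0:ℝ) < x := lt_of_lt_of_le one_pos hx1
  have int1 : IntegrableOn (fun t => θ t * Real.exp (-x * μ t)) (Ioc 0 t0) :=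
    (hint x hxpos).mono_set (fun t ht => ht.1)
  have int2 : IntegrableOn (fun t => θ t * Real.exp (-x * μ t)) (Ioi t0) :=
    (hint x hxpos).mono_set (fun t ht => lt_trans ht0 ht)
  have hsplit : (∫ t in Ioi (0:ℝ), θ t * Real.exp (-x * μ t)) =
      (∫ t in Ioc (0:ℝ) t0, θ t * Real.exp (-x * μ t)) +
      (∫ t in Ioi t0, θ t * Real.exp (-x * μ t)) := by
    rw [← setIntegral_union (Set.Ioc_disjoint_Ioi le_rfl) measurableSet_Ioi int1 int2,
      Ioc_union_Ioi_eq_Ioi ht0.le]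
  -- bound on the box part
  have hIcc_sub : Icc a b ⊆ Ioc (0:ℝ) t0 := fun t ht => ⟨lt_of_lt_of_le ha ht.1, le_trans ht.2 (le_of_lt hbt0)⟩
  have intIcc : IntegrableOn (fun t => θ t * Real.exp (-x * μ t)) (Icc a b) :=
    int1.mono_set hIcc_sub
  have step1 : (∫ t in Ioc (0:ℝ) t0, θ t * Real.exp (-x * μ t)) ≤
      (∫ t in Icc a b, θ t * Real.exp (-x * μ t)) := by
    have hmono := setIntegral_mono_set int1.neg
      (by
        rw [EventuallyLE, ae_restrict_iff' measurableSet_Ioc]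
        filter_upwards [] with t ht
        have h1 := hneg t ht
        have h2 := (Real.exp_pos (-x * μ t)).le
        simp only [Pi.zero_apply, Pi.neg_apply]
        nlinarith)
      (HasSubset.Subset.eventuallyLE hIcc_sub)
    simp only [Pi.neg_apply, integral_neg] at hmono
    linarith
  have step2 : (∫ t in Icc a b, θ t * Real.exp (-x * μ t)) ≤
      -(ε * (b - a) * Real.exp (-x * μ b)) := by
    have hmono : (∫ t in Icc a b, θ t * Real.exp (-x * μ t)) ≤
        (∫ _t in Icc a b, -ε * Real.exp (-x * μ b)) := by
      apply setIntegral_mono_on intIcc (integrableOn_const (by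
        rw [Real.volume_Icc]; exact ENNReal.ofReal_ne_top)) measurableSet_Icc
      intro t ht
      have ht0' : t ∈ Ioi (0:ℝ) := lt_of_lt_of_le ha ht.1
      have hμle : μ t ≤ μ b := hμmono.monotoneOn ht0' hb ht.2
      have hexp : Real.exp (-x * μ t) ≤ Real.exp (-x * μ b) * Real.exp (x * (μ b - μ t)) := by
        rw [← Real.exp_add]; apply le_of_eq; congr 1; ring
      have hexple : Real.exp (-x * μ b) ≤ Real.exp (-x * μ t) := by
        apply Real.exp_le_exp.2; nlinarith
      have h1 := hbox t ht
      calc θ t * Real.exp (-x * μ t) ≤ -ε * Real.exp (-x * μ t) := by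
            apply mul_le_mul_of_nonneg_right h1 (Real.exp_pos _).le
        _ ≤ -ε * Real.exp (-x * μ b) := by nlinarith
    refine le_trans hmono (le_of_eq ?_)
    rw [setIntegral_const, measureReal_def, Real.volume_Icc, smul_eq_mul,
      ENNReal.toReal_ofReal (by linarith)]
    ring
  -- bound on the tail part
  have step3 : (∫ t in Ioi t0, θ t * Real.exp (-x * μ t)) ≤
      C * Real.exp (μ t0) * Real.exp (-x * μ t0) := by
    have h1 : (∫ t in Ioi t0, θ t * Real.exp (-x * μ t)) ≤
        ∫ t in Ioi t0, |θ t * Real.exp (-x * μ t)| := by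
      apply setIntegral_mono_on int2 int2.abs measurableSet_Ioi
      intro t _; exact le_abs_self _
    have h2 : (∫ t in Ioi t0, |θ t * Real.exp (-x * μ t)|) ≤
        ∫ t in Ioi t0, Real.exp (-(x-1) * μ t0) * (|θ t| * Real.exp (-1 * μ t)) := by
      apply setIntegral_mono_on int2.abs
        ((habs1.mono_set (fun t ht => lt_trans ht0 ht)).const_mul _) measurableSet_Ioi
      intro t ht
      have htpos : t ∈ Ioi (0:ℝ) := lt_trans ht0 ht
      have hμt := hμpos t htpos
      have hμt0t : μ t0 ≤ μ t := (hμmono ht0 htpos ht).le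
      rw [abs_mul, abs_of_pos (Real.exp_pos _)]
      have : Real.exp (-x * μ t) ≤ Real.exp (-(x-1) * μ t0) * Real.exp (-1 * μ t) := by
        rw [← Real.exp_add]
        apply Real.exp_le_exp.2
        nlinarith
      nlinarith [abs_nonneg (θ t), Real.exp_pos (-x * μ t), Real.exp_pos (-(x-1) * μ t0),
        Real.exp_pos (-1 * μ t)]
    have h3 : (∫ t in Ioi t0, Real.exp (-(x-1) * μ t0) * (|θ t| * Real.exp (-1 * μ t)))
        = Real.exp (-(x-1) * μ t0) * C := by
      rw [MeasureTheory.integral_const_mul]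
    have h4 : Real.exp (-(x-1) * μ t0) * C = C * Real.exp (μ t0) * Real.exp (-x * μ t0) := by
      rw [mul_comm, mul_assoc, ← Real.exp_add]
      congr 2
      ring
    linarith
  -- conclusion
  have hkey : C * Real.exp (μ t0) * Real.exp (-x * μ t0) <
      ε * (b - a) * Real.exp (-x * μ b) := by
    have heq : Real.exp (-x * μ t0) = Real.exp (x * (μ b - μ t0)) * Real.exp (-x * μ b) := by
      rw [← Real.exp_add]; congr 1; ring
    rw [heq]
    have hepos := Real.exp_pos (-x * μ b)
    nlinarith [hx, Real.exp_pos (x * (μ b - μ t0))]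
  rw [hsplit]
  linarith

theorem mono_nonneg_deriv {φ : ℝ → ℝ} {s : Set ℝ} {x d : ℝ} (hm : MonotoneOn φ s)
    (hs : s ∈ 𝓝 x) (hd : HasDerivAt φ d x) : 0 ≤ d := by
  have hslope := hasDerivAt_iff_tendsto_slope.1 hd
  have h2 : Tendsto (slope φ x) (𝓝[>] x) (𝓝 d) :=
    hslope.mono_left (nhdsWithin_mono x (fun y hy => ne_of_gt hy))
  apply ge_of_tendsto h2
  have hx : x ∈ s := mem_of_mem_nhds hs
  filter_upwards [eventually_nhdsWithin_of_eventually_nhds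
    (eventually_of_mem hs (fun y hy => hy)), self_mem_nhdsWithin] with y hy hxy
  rw [slope_def_field]
  exact div_nonneg (sub_nonneg.2 (hm hx hy (le_of_lt hxy)))
    (by simp only [mem_Ioi] at hxy; linarith)

theorem tail_nonneg (F G A B : ℝ → ℝ) (x : ℝ) (hx : 0 < x)
    (hFd : ∀ w > (0:ℝ), HasDerivAt F (-(A w)) w)
    (hGd : ∀ w > (0:ℝ), HasDerivAt G (-(B w)) w)
    (hAc : ContinuousOn A (Ioi 0)) (hBc : ContinuousOn B (Ioi 0))
    (hBpos : ∀ w > (0:ℝ), 0 < B w)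
    (hF0 : Tendsto F atTop (𝓝 0)) (hG0 : Tendsto G atTop (𝓝 0))
    (hanti : ∀ u v, x ≤ u → u < v → A v / B v ≤ A u / B u) :
    0 ≤ (A x / B x) * G x - F x := by
  set c : ℝ := A x / B x with hc
  set φ : ℝ → ℝ := fun w => c * G w - F w with hφ
  have hψ : ∀ T, x ≤ T → φ T ≤ φ x := by
    intro T hT
    rcases eq_or_lt_of_le hT with rfl | hT'
    · exact le_refl _
    have hFTC : ∫ w in x..T, -(c * B w - A w) = φ T - φ x := by
      apply intervalIntegral.integral_eq_sub_of_hasDerivAt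
      · intro w hw
        rw [uIcc_of_le hT] at hw
        have hw0 : (0:ℝ) < w := lt_of_lt_of_le hx hw.1
        have := ((hGd w hw0).const_mul c).sub (hFd w hw0)
        refine this.congr_deriv ?_
        ring
      · apply ContinuousOn.intervalIntegrable
        rw [uIcc_of_le hT]
        have hsub : Icc x T ⊆ Ioi (0:ℝ) := fun w hw => lt_of_lt_of_le hx hw.1
        exact (((hBc.mono hsub).const_smul c).sub (hAc.mono hsub)).neg
    have hnn : 0 ≤ ∫ w in x..T, (c * B w - A w) := by
      apply intervalIntegral.integral_nonneg hT
      intro w hw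
      have hw0 : (0:ℝ) < w := lt_of_lt_of_le hx hw.1
      have hBw := hBpos w hw0
      have hRle : A w / B w ≤ c := by
        rcases eq_or_lt_of_le hw.1 with rfl | hlt
        · exact le_refl _
        · exact hanti x w (le_refl x) hlt
      have : A w ≤ c * B w := by
        rw [div_le_iff₀ hBw] at hRle
        linarith
      linarith
    rw [intervalIntegral.integral_neg] at hFTC
    linarith
  have hlim : Tendsto φ atTop (𝓝 0) := by
    have := (hG0.const_mul c).sub hF0
    simpa using this
  have : 0 ≤ φ x := by
    apply le_of_tendsto hlim
    filter_upwards [eventually_ge_atTop x] with T hT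
    exact hψ T hT
  simpa [hφ, hc] using this

set_option maxHeartbeats 4000000 in
theorem stmt_8 (f g μ : ℝ → ℝ)
    (hf : ContinuousOn f (Ioi 0)) (hg : ContinuousOn g (Ioi 0))
    (hgpos : ∀ t ∈ Ioi (0 : ℝ), 0 < g t)
    (hμpos : ∀ t ∈ Ioi (0 : ℝ), 0 < μ t)
    (hμdiff : DifferentiableOn ℝ μ (Ioi 0))
    (hμmono : StrictMonoOn μ (Ioi 0))
    (μ0 : ℝ) (hμ0 : Tendsto μ (𝓝[>] (0 : ℝ)) (𝓝 μ0))
    (hμonto : μ '' Ioi 0 = Ioi μ0)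
    (hfint : ∀ x > (0 : ℝ), IntegrableOn (fun t => f t * Real.exp (-x * μ t)) (Ioi 0))
    (hgint : ∀ x > (0 : ℝ), IntegrableOn (fun t => g t * Real.exp (-x * μ t)) (Ioi 0))
    (F G : ℝ → ℝ)
    (hF : ∀ x, F x = ∫ t in Ioi (0 : ℝ), f t * Real.exp (-x * μ t))
    (hG : ∀ x, G x = ∫ t in Ioi (0 : ℝ), g t * Real.exp (-x * μ t))
    (tstar : ℝ) (htstar : tstar ∈ Ioi (0 : ℝ))
    (hinc : StrictMonoOn (fun t => f t / g t) (Ioo 0 tstar))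
    (hdec : StrictAntiOn (fun t => f t / g t) (Ioi tstar))
    (L : ℝ) (hLneg : L < 0)
    (hL : Tendsto (fun x => deriv F x / deriv G x * G x - F x)
      (𝓝[>] (0 : ℝ)) (𝓝 L)) :
    ∃ xstar > (0 : ℝ), MonotoneOn (fun x => F x / G x) (Ioo 0 xstar) ∧
      AntitoneOn (fun x => F x / G x) (Ioi xstar) := by
  have hμc : ContinuousOn μ (Ioi 0) := hμdiff.continuousOn
  have hmf : AEStronglyMeasurable f (volume.restrict (Ioi 0)) :=
    hf.aestronglyMeasurable measurableSet_Ioi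
  have hmg : AEStronglyMeasurable g (volume.restrict (Ioi 0)) :=
    hg.aestronglyMeasurable measurableSet_Ioi
  have hmμ : AEStronglyMeasurable μ (volume.restrict (Ioi 0)) :=
    hμc.aestronglyMeasurable measurableSet_Ioi
  have hmfμ : AEStronglyMeasurable (fun t => f t * μ t) (volume.restrict (Ioi 0)) :=
    hmf.mul hmμ
  have hmgμ : AEStronglyMeasurable (fun t => g t * μ t) (volume.restrict (Ioi 0)) :=
    hmg.mul hmμ
  have hfμint : ∀ x > (0:ℝ), IntegrableOn (fun t => f t * μ t * Real.exp (-x * μ t)) (Ioi 0) :=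
    fun x hx => (lap_deriv f μ hmf hmμ hμpos hfint x hx).1
  have hgμint : ∀ x > (0:ℝ), IntegrableOn (fun t => g t * μ t * Real.exp (-x * μ t)) (Ioi 0) :=
    fun x hx => (lap_deriv g μ hmg hmμ hμpos hgint x hx).1
  set A : ℝ → ℝ := fun x => ∫ t in Ioi (0:ℝ), f t * μ t * Real.exp (-x * μ t) with hA
  set B : ℝ → ℝ := fun x => ∫ t in Ioi (0:ℝ), g t * μ t * Real.exp (-x * μ t) with hB
  have hFeq : F = fun x => ∫ t in Ioi (0:ℝ), f t * Real.exp (-x * μ t) := funext hF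
  have hGeq : G = fun x => ∫ t in Ioi (0:ℝ), g t * Real.exp (-x * μ t) := funext hG
  have hFd : ∀ x > (0:ℝ), HasDerivAt F (-(A x)) x := by
    intro x hx
    have h := (lap_deriv f μ hmf hmμ hμpos hfint x hx).2
    rw [hFeq]
    simpa [hA, integral_neg] using h
  have hGd : ∀ x > (0:ℝ), HasDerivAt G (-(B x)) x := by
    intro x hx
    have h := (lap_deriv g μ hmg hmμ hμpos hgint x hx).2
    rw [hGeq]
    simpa [hB, integral_neg] using h
  have hAd : ∀ x > (0:ℝ), HasDerivAt A
      (∫ t in Ioi (0:ℝ), -(f t * μ t * μ t * Real.exp (-x * μ t))) x := by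
    intro x hx
    have h := (lap_deriv (fun t => f t * μ t) μ hmfμ hmμ hμpos hfμint x hx).2
    rw [hA]
    exact h
  have hBd : ∀ x > (0:ℝ), HasDerivAt B
      (∫ t in Ioi (0:ℝ), -(g t * μ t * μ t * Real.exp (-x * μ t))) x := by
    intro x hx
    have h := (lap_deriv (fun t => g t * μ t) μ hmgμ hmμ hμpos hgμint x hx).2
    rw [hB]
    exact h
  have hAc : ContinuousOn A (Ioi 0) :=
    fun x hx => ((hAd x hx).continuousAt).continuousWithinAt
  have hBc : ContinuousOn B (Ioi 0) :=
    fun x hx => ((hBd x hx).continuousAt).continuousWithinAt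
  have hGpos : ∀ x > (0:ℝ), 0 < G x := by
    intro x hx
    rw [hG x]
    exact lap_pos g μ hg hgpos (hgint x hx)
  have hBpos : ∀ x > (0:ℝ), 0 < B x := by
    intro x hx
    rw [hB]
    exact lap_pos (fun t => g t * μ t) μ (hg.mul hμc)
      (fun t ht => mul_pos (hgpos t ht) (hμpos t ht)) (hgμint x hx)
  have hF0 : Tendsto F atTop (𝓝 0) := by
    rw [hFeq]; exact lap_zero f μ hmf hmμ hμpos hfint
  have hG0 : Tendsto G atTop (𝓝 0) := by
    rw [hGeq]; exact lap_zero g μ hmg hmμ hμpos hgint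
  set R : ℝ → ℝ := fun x => A x / B x with hR
  set H : ℝ → ℝ := fun x => R x * G x - F x with hH
  have hRB : ∀ x > (0:ℝ), R x * B x = A x := by
    intro x hx
    rw [hR]
    exact div_mul_cancel₀ _ (ne_of_gt (hBpos x hx))
  -- transfer of hL
  have hLH : Tendsto H (𝓝[>] (0:ℝ)) (𝓝 L) := by
    apply hL.congr'
    filter_upwards [self_mem_nhdsWithin] with x hx
    have h1 : deriv F x = -(A x) := (hFd x hx).deriv
    have h2 : deriv G x = -(B x) := (hGd x hx).deriv
    rw [hH, hR]
    rw [h1, h2, neg_div_neg_eq]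
  have hHneg : ∀ᶠ x in 𝓝[>] (0:ℝ), H x < 0 := hLH.eventually_lt_const hLneg
  obtain ⟨δ, hδ, hδsub⟩ := mem_nhdsGT_iff_exists_Ioo_subset.1 hHneg
  -- rho and its unimodality
  set ρ : ℝ → ℝ := fun t => f t / g t with hρ
  have hgne : ∀ t ∈ Ioi (0:ℝ), g t ≠ 0 := fun t ht => ne_of_gt (hgpos t ht)
  have hρc : ContinuousOn ρ (Ioi 0) := hf.div hg hgne
  have hts : (0:ℝ) < tstar := htstar
  have hmono1 : MonotoneOn ρ (Ioc 0 tstar) := by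
    intro u hu v hv huv
    rcases eq_or_lt_of_le huv with rfl | huv'
    · exact le_refl _
    rcases eq_or_lt_of_le hv.2 with rfl | hv'
    · -- v = tstar : limit argument
      have hcont : ContinuousAt ρ v :=
        hρc.continuousAt (Ioi_mem_nhds hv.1)
      have hlim : Tendsto ρ (𝓝[<] v) (𝓝 (ρ v)) :=
        (hcont.continuousWithinAt).tendsto
      apply ge_of_tendsto hlim
      filter_upwards [Ioo_mem_nhdsLT_of_mem (⟨huv', le_refl v⟩ : v ∈ Ioc u v)] with w hw
      exact (hinc ⟨hu.1, huv'⟩ ⟨lt_trans hu.1 hw.1, hw.2⟩ hw.1).le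
    · exact (hinc ⟨hu.1, huv'.trans hv'⟩ ⟨lt_trans hu.1 huv', hv'⟩ huv').le
  have hanti1 : AntitoneOn ρ (Ici tstar) := by
    intro u hu v hv huv
    rcases eq_or_lt_of_le huv with rfl | huv'
    · exact le_refl _
    rcases eq_or_lt_of_le (mem_Ici.1 hu) with rfl | hu'
    · -- u = tstar
      have hcont : ContinuousAt ρ tstar :=
        hρc.continuousAt (Ioi_mem_nhds hts)
      have hlim : Tendsto ρ (𝓝[>] tstar) (𝓝 (ρ tstar)) :=
        (hcont.continuousWithinAt).tendsto
      apply ge_of_tendsto hlim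
      filter_upwards [Ioo_mem_nhdsGT_of_mem (⟨le_refl tstar, huv'⟩ : tstar ∈ Ico tstar v)]
        with w hw
      exact (hdec hw.1 huv' hw.2).le
    · exact (hdec hu' (lt_trans hu' huv') huv').le
  have hmin : ∀ t₁ s t₂, 0 < t₁ → t₁ < s → s < t₂ → ρ t₁ ≤ ρ s ∨ ρ t₂ ≤ ρ s := by
    intro t₁ s t₂ ht₁ h1 h2
    rcases le_or_gt s tstar with hs | hs
    · exact Or.inl (hmono1 ⟨ht₁, (h1.trans_le hs).le⟩ ⟨lt_trans ht₁ h1, hs⟩ h1.le)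
    · exact Or.inr (hanti1 (le_of_lt hs) (le_of_lt (lt_trans hs h2)) h2.le)
  -- transform identity
  have hTid : ∀ c : ℝ, ∀ w > (0:ℝ),
      (∫ t in Ioi (0:ℝ), ((f t - c * g t) * μ t) * Real.exp (-w * μ t)) = A w - c * B w := by
    intro c w hw
    have heq : (fun t => ((f t - c * g t) * μ t) * Real.exp (-w * μ t)) =
        (fun t => f t * μ t * Real.exp (-w * μ t) - c * (g t * μ t * Real.exp (-w * μ t))) := by
      funext t; ring
    rw [heq, integral_sub (hfμint w hw) ((hgμint w hw).const_mul c),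
      MeasureTheory.integral_const_mul, hA, hB]
  have hθmeas : ∀ c : ℝ, AEStronglyMeasurable (fun t => (f t - c * g t) * μ t)
      (volume.restrict (Ioi 0)) := fun c => (hmf.sub (hmg.const_mul c)).mul hmμ
  have hθint : ∀ c : ℝ, ∀ w > (0:ℝ),
      IntegrableOn (fun t => ((f t - c * g t) * μ t) * Real.exp (-w * μ t)) (Ioi 0) := by
    intro c w hw
    refine ((hfμint w hw).sub ((hgμint w hw).const_mul c)).congr ?_
    filter_upwards [] with t
    simp only [Pi.sub_apply]
    ring
  have hgρ : ∀ t ∈ Ioi (0:ℝ), g t * ρ t = f t := by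
    intro t ht
    rw [hρ]
    rw [mul_comm]
    exact div_mul_cancel₀ (f t) (hgne t ht)
  have hθsign : ∀ (c : ℝ) (t : ℝ), t ∈ Ioi (0:ℝ) →
      (f t - c * g t) * μ t = g t * μ t * (ρ t - c) := by
    intro c t ht
    linear_combination (-(μ t)) * (hgρ t ht)
  -- quasiconcavity of R
  have hq : ∀ x y z : ℝ, 0 < x → x < y → y < z → R y < R x → R y < R z → False := by
    intro x y z hx hxy hyz h1 h2
    have hy : (0:ℝ) < y := lt_trans hx hxy
    have hz : (0:ℝ) < z := lt_trans hy hyz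
    set c : ℝ := R y with hc
    have hTx : 0 < A x - c * B x := by
      nlinarith [mul_pos (hBpos x hx) (sub_pos.2 h1), hRB x hx]
    have hTz : 0 < A z - c * B z := by
      nlinarith [mul_pos (hBpos z hz) (sub_pos.2 h2), hRB z hz]
    have hTy0 : A y - c * B y = 0 := by
      have := hRB y hy
      rw [hc]
      linarith
    by_cases hS : ∃ t, 0 < t ∧ c < ρ t
    · obtain ⟨t₀, ht₀pos, ht₀⟩ := hS
      set S : Set ℝ := {t : ℝ | 0 < t ∧ c < ρ t} with hSdef
      have hconv : ∀ t₁ t₂ s : ℝ, t₁ ∈ S → t₂ ∈ S → t₁ < s → s < t₂ → s ∈ S := by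
        intro t₁ t₂ s h₁ h₂ hl hr
        refine ⟨lt_trans h₁.1 hl, ?_⟩
        rcases hmin t₁ s t₂ h₁.1 hl hr with h | h
        · exact lt_of_lt_of_le h₁.2 h
        · exact lt_of_lt_of_le h₂.2 h
      have hne : (μ '' S).Nonempty := ⟨μ t₀, t₀, ⟨ht₀pos, ht₀⟩, rfl⟩
      have hbb : BddBelow (μ '' S) := by
        refine ⟨0, ?_⟩
        rintro v ⟨t, ht, rfl⟩
        exact (hμpos t ht.1).le
      set α : ℝ := sInf (μ '' S) with hα
      have hαle : ∀ t ∈ S, α ≤ μ t := fun t ht => csInf_le hbb ⟨t, ht, rfl⟩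
      have hlow : ∀ t ∈ Ioi (0:ℝ), μ t < α → (f t - c * g t) * μ t ≤ 0 := by
        intro t ht hμt
        have hρt : ρ t ≤ c := by
          by_contra hcon
          push_neg at hcon
          exact absurd (hαle t ⟨ht, hcon⟩) (not_le.2 hμt)
        rw [hθsign c t ht]
        have := mul_pos (hgpos t ht) (hμpos t ht)
        nlinarith
      have hmemS : ∀ t ∈ Ioi (0:ℝ), 0 ≤ (f t - c * g t) * μ t → True := fun _ _ _ => trivial
      have hinS : ∀ t ∈ S, 0 ≤ (f t - c * g t) * μ t := by
        intro t ht
        rw [hθsign c t ht.1]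
        have := mul_pos (hgpos t ht.1) (hμpos t ht.1)
        nlinarith [ht.2]
      by_cases hbdd : BddAbove (μ '' S)
      · set β : ℝ := sSup (μ '' S) with hβ
        have hαβ : α ≤ β := csInf_le_csSup hne hbb hbdd
        have key := lap_unimodal_pos (fun t => (f t - c * g t) * μ t) μ (hθmeas c) hmμ hμpos
          (hθint c) α β hαβ hlow
          (fun t ht hα' hβ' => by
            obtain ⟨u, ⟨s₁, hs₁, rfl⟩, hu⟩ := exists_lt_of_csInf_lt hne hα'
            obtain ⟨v, ⟨s₂, hs₂, rfl⟩, hv⟩ := exists_lt_of_lt_csSup hne hβ'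
            have hlt1 : s₁ < t := (hμmono.lt_iff_lt hs₁.1 ht).1 hu
            have hlt2 : t < s₂ := (hμmono.lt_iff_lt ht hs₂.1).1 hv
            exact hinS t (hconv s₁ s₂ t hs₁ hs₂ hlt1 hlt2))
          (fun t ht hβ' => by
            have hρt : ρ t ≤ c := by
              by_contra hcon
              push_neg at hcon
              have : μ t ≤ β := le_csSup hbdd ⟨t, ⟨ht, hcon⟩, rfl⟩
              exact absurd this (not_le.2 hβ')
            show (f t - c * g t) * μ t ≤ 0
            rw [hθsign c t ht]
            have := mul_pos (hgpos t ht) (hμpos t ht)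
            nlinarith)
          x y z hx hxy hyz
          (by rw [hTid c x hx]; exact hTx)
          (by rw [hTid c z hz]; exact hTz)
        rw [hTid c y hy] at key
        linarith
      · -- unbounded case : single sign change
        have M := lap_mono (fun t => -((f t - c * g t) * μ t)) μ (hθmeas c).neg hmμ hμpos
          (fun w hw => ((hθint c w hw).neg).congr (by
            filter_upwards [] with t
            simp only [Pi.neg_apply]
            ring))
          α
          (fun t ht hμt => by
            have h := hlow t ht hμt
            show (0:ℝ) ≤ -((f t - c * g t) * μ t)
            linarith)
          (fun t ht hμt => by
            obtain ⟨u, ⟨s₁, hs₁, rfl⟩, hu⟩ := exists_lt_of_csInf_lt hne hμt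
            obtain ⟨v, ⟨s₂, hs₂, rfl⟩, hv⟩ := not_bddAbove_iff.1 hbdd (μ t)
            have hlt1 : s₁ < t := (hμmono.lt_iff_lt hs₁.1 ht).1 hu
            have hlt2 : t < s₂ := (hμmono.lt_iff_lt ht hs₂.1).1 hv
            have h := hinS t (hconv s₁ s₂ t hs₁ hs₂ hlt1 hlt2)
            show -((f t - c * g t) * μ t) ≤ 0
            linarith)
        have hTneg : ∀ w, (∫ t in Ioi (0:ℝ), -((f t - c * g t) * μ t) * Real.exp (-w * μ t))
            = -(∫ t in Ioi (0:ℝ), ((f t - c * g t) * μ t) * Real.exp (-w * μ t)) := by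
          intro w
          rw [← integral_neg]
          congr 1 with t
          ring
        have hM := M (mem_Ioi.2 hy) (mem_Ioi.2 hz) hyz.le
        simp only [] at hM
        rw [hTneg y, hTneg z, hTid c y hy, hTid c z hz, hTy0] at hM
        have hepos := Real.exp_pos (z * α)
        nlinarith [Real.exp_pos (y * α)]
    · -- S empty : integrand nonpositive contradicts hTx
      push_neg at hS
      have : (∫ t in Ioi (0:ℝ), ((f t - c * g t) * μ t) * Real.exp (-x * μ t)) ≤ 0 := by
        apply setIntegral_nonpos_ae measurableSet_Ioi
        filter_upwards [] with t ht
        have hρt : ρ t ≤ c := hS t ht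
        have hgm := mul_pos (hgpos t ht) (hμpos t ht)
        have hexp := (Real.exp_pos (-x * μ t)).le
        have h3 : (f t - c * g t) * μ t ≤ 0 := by
          rw [hθsign c t ht]; nlinarith
        nlinarith [mul_nonneg (neg_nonneg.2 h3) hexp]
      rw [hTid c x hx] at this
      linarith
  -- Claim B : once a strict decrease has happened, R is nonincreasing afterwards
  have hclaimB : ∀ u v w z', 0 < u → u < v → v ≤ w → w < z' → R v < R u → R z' ≤ R w := by
    intro u v w z' hu huv hvw hwz hRvu
    by_contra hcon
    push_neg at hcon
    have hRwu : R w < R u := by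
      rcases eq_or_lt_of_le hvw with rfl | hvw'
      · exact hRvu
      · by_contra hcon2
        push_neg at hcon2
        exact hq u v w hu huv hvw' hRvu (lt_of_lt_of_le hRvu hcon2)
    exact hq u w z' hu (lt_of_lt_of_le huv hvw) hwz hRwu hcon
  -- derivative of H
  have hHdiff : ∀ x, 0 < x → ∃ dR, HasDerivAt R dR x ∧ HasDerivAt H (dR * G x) x := by
    intro x hx
    have hRdx := HasDerivAt.div (hAd x hx) (hBd x hx) (ne_of_gt (hBpos x hx))
    refine ⟨_, hRdx, ?_⟩
    have h1 := (HasDerivAt.mul hRdx (hGd x hx)).sub (hFd x hx)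
    refine h1.congr_deriv ?_
    change _ * G x + R x * -B x - -A x = _
    linear_combination -(hRB x hx)
  have hHcont : ∀ x, 0 < x → ContinuousAt H x := by
    intro x hx
    obtain ⟨dR, _, h⟩ := hHdiff x hx
    exact h.continuousAt
  by_cases hD : ∃ v, 0 < v ∧ ∃ u, 0 < u ∧ u < v ∧ R v < R u
  · -- main case : a strict decrease of R exists
    obtain ⟨v₀, hv₀pos, u₀, hu₀pos, hu₀v₀, hRv₀⟩ := hD
    set D : Set ℝ := {v | 0 < v ∧ ∃ u, 0 < u ∧ u < v ∧ R v < R u} with hDdef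
    have hDne : D.Nonempty := ⟨v₀, hv₀pos, u₀, hu₀pos, hu₀v₀, hRv₀⟩
    have hDbb : BddBelow D := ⟨0, fun v hv => hv.1.le⟩
    have hDup : ∀ v ∈ D, ∀ z', v < z' → z' ∈ D := by
      intro v hv z' hvz
      obtain ⟨hv0, u, hu0, huv, hRvu⟩ := hv
      have h := hclaimB u v v z' hu0 huv (le_refl v) hvz hRvu
      exact ⟨lt_trans hv0 hvz, u, hu0, lt_trans huv hvz, lt_of_le_of_lt h hRvu⟩
    have hHtail0 : ∀ x ∈ D, 0 ≤ H x := by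
      intro x hx
      obtain ⟨hx0, u, hu0, hux, hRxu⟩ := hx
      have hanti : ∀ p q', x ≤ p → p < q' → A q' / B q' ≤ A p / B p := by
        intro p q' hxp hpq
        exact hclaimB u x p q' hu0 hux hxp hpq hRxu
      exact tail_nonneg F G A B x hx0 hFd hGd hAc hBc hBpos hF0 hG0 hanti
    set N : Set ℝ := {x | 0 < x ∧ H x < 0} with hNdef
    have hδpos : (0:ℝ) < δ := hδ
    have hNne : (δ/2) ∈ N := by
      refine ⟨by positivity, ?_⟩
      exact hδsub ⟨by positivity, by linarith [half_lt_self hδpos]⟩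
    have hNneS : N.Nonempty := ⟨δ/2, hNne⟩
    have hND : ∀ x ∈ N, x ∉ D := fun x hx hxD => absurd (hHtail0 x hxD) (not_le.2 hx.2)
    have hNv₀ : ∀ x ∈ N, x ≤ v₀ := by
      intro x hx
      by_contra hcon; push_neg at hcon
      exact hND x hx (hDup v₀ ⟨hv₀pos, u₀, hu₀pos, hu₀v₀, hRv₀⟩ x hcon)
    set vs : ℝ := sInf D with hvs
    have hmemD : ∀ w, vs < w → w ∈ D := by
      intro w hw
      obtain ⟨d, hd, hdw⟩ := exists_lt_of_csInf_lt hDne hw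
      exact hDup d hd w hdw
    have hRmonoIoo : MonotoneOn R (Ioo 0 vs) := by
      intro p hp q hq hpq
      rcases eq_or_lt_of_le hpq with rfl | hpq'
      · exact le_refl _
      by_contra hcon; push_neg at hcon
      have hqD : q ∈ D := ⟨hq.1, p, hp.1, hpq', hcon⟩
      exact absurd (csInf_le hDbb hqD) (not_le.2 hq.2)
    have hHmono : MonotoneOn H (Ioo 0 vs) := by
      apply monotoneOn_of_deriv_nonneg (convex_Ioo 0 vs)
      · intro w hw
        exact (hHcont w hw.1).continuousWithinAt
      · intro w hw
        rw [interior_Ioo] at hw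
        obtain ⟨dR, _, h⟩ := hHdiff w hw.1
        exact ⟨_, h.hasDerivWithinAt⟩
      · intro w hw
        rw [interior_Ioo] at hw
        obtain ⟨dR, hRd, h⟩ := hHdiff w hw.1
        rw [h.deriv]
        have hdR : 0 ≤ dR :=
          mono_nonneg_deriv hRmonoIoo (isOpen_Ioo.mem_nhds hw) hRd
        exact mul_nonneg hdR (hGpos w hw.1).le
    set xs : ℝ := sSup N with hxs
    have hNbdd : BddAbove N := ⟨v₀, fun x hx => hNv₀ x hx⟩
    have hxs_pos : 0 < xs := lt_of_lt_of_le hNne.1 (le_csSup hNbdd hNne)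
    have hNdown : ∀ p q', 0 < p → p < q' → q' ∈ N → p ∈ N := by
      intro p q' hp hpq hq'
      refine ⟨hp, ?_⟩
      have hq'le : q' ≤ vs := by
        by_contra hcon; push_neg at hcon
        exact (hND q' hq') (hmemD q' hcon)
      rcases lt_or_eq_of_le hq'le with hlt | heq
      · exact lt_of_le_of_lt (hHmono ⟨hp, lt_trans hpq hlt⟩ ⟨hq'.1, hlt⟩ hpq.le) hq'.2
      · have hlim : Tendsto H (𝓝[<] q') (𝓝 (H q')) :=
          ((hHcont q' hq'.1).continuousWithinAt).tendsto
        have hple : H p ≤ H q' := by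
          apply ge_of_tendsto hlim
          filter_upwards [Ioo_mem_nhdsLT_of_mem (⟨hpq, le_refl q'⟩ : q' ∈ Ioc p q')]
            with w hw
          exact hHmono ⟨hp, heq ▸ hpq⟩ ⟨lt_trans hp hw.1, heq ▸ hw.2⟩ hw.1.le
        exact lt_of_le_of_lt hple hq'.2
    refine ⟨xs, hxs_pos, ?_, ?_⟩
    · apply monotoneOn_of_deriv_nonneg (convex_Ioo 0 xs)
      · intro w hw
        exact (((hFd w hw.1).continuousAt).div ((hGd w hw.1).continuousAt)
          (ne_of_gt (hGpos w hw.1))).continuousWithinAt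
      · intro w hw
        rw [interior_Ioo] at hw
        exact ⟨_, ((hFd w hw.1).div (hGd w hw.1)
          (ne_of_gt (hGpos w hw.1))).hasDerivWithinAt⟩
      · intro w hw
        rw [interior_Ioo] at hw
        have hw0 := hw.1
        have hd := (hFd w hw0).div (hGd w hw0) (ne_of_gt (hGpos w hw0))
        rw [show deriv (fun x => F x / G x) w = _ from hd.deriv]
        have hwN : w ∈ N := by
          obtain ⟨n, hn, hwn⟩ := exists_lt_of_lt_csSup hNneS hw.2
          exact hNdown w n hw0 hwn hn
        have hHw : H w < 0 := hwN.2
        have hHweq : H w = R w * G w - F w := by rw [hH]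
        have hBH : -(A w) * G w - F w * -(B w) = -(B w * H w) := by
          rw [hHweq]
          linear_combination G w * (hRB w hw0)
        rw [hBH]
        apply div_nonneg _ (sq_nonneg _)
        nlinarith [hBpos w hw0]
    · apply antitoneOn_of_deriv_nonpos (convex_Ioi xs)
      · intro w hw
        have hw0 : 0 < w := lt_trans hxs_pos hw
        exact (((hFd w hw0).continuousAt).div ((hGd w hw0).continuousAt)
          (ne_of_gt (hGpos w hw0))).continuousWithinAt
      · intro w hw
        rw [interior_Ioi] at hw
        have hw0 : 0 < w := lt_trans hxs_pos hw
        exact ⟨_, ((hFd w hw0).div (hGd w hw0)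
          (ne_of_gt (hGpos w hw0))).hasDerivWithinAt⟩
      · intro w hw
        rw [interior_Ioi] at hw
        have hw0 : 0 < w := lt_trans hxs_pos hw
        have hd := (hFd w hw0).div (hGd w hw0) (ne_of_gt (hGpos w hw0))
        rw [show deriv (fun x => F x / G x) w = _ from hd.deriv]
        have hHw : 0 ≤ H w := by
          by_contra hcon; push_neg at hcon
          have hle : w ≤ xs := le_csSup hNbdd ⟨hw0, hcon⟩
          have hw' : xs < w := hw
          linarith
        have hHweq : H w = R w * G w - F w := by rw [hH]
        have hBH : -(A w) * G w - F w * -(B w) = -(B w * H w) := by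
          rw [hHweq]
          linear_combination G w * (hRB w hw0)
        rw [hBH]
        apply div_nonpos_of_nonpos_of_nonneg _ (sq_nonneg _)
        nlinarith [hBpos w hw0]
  · -- R is nondecreasing everywhere : contradiction via concentration
    exfalso
    push_neg at hD
    have hRmono : ∀ u v, 0 < u → u ≤ v → R u ≤ R v := by
      intro u v hu huv
      rcases eq_or_lt_of_le huv with rfl | h
      · exact le_refl _
      · exact hD v (lt_trans hu h) u hu h
    -- positive lower bound of g*μ on compact boxes
    have hboxmin : ∀ a b : ℝ, 0 < a → a < b → ∃ m : ℝ, 0 < m ∧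
        ∀ t ∈ Icc a b, m ≤ g t * μ t := by
      intro a b ha hab
      have hsub : Icc a b ⊆ Ioi (0:ℝ) := fun t ht => lt_of_lt_of_le ha ht.1
      have hkc : ContinuousOn (fun t => g t * μ t) (Icc a b) :=
        (hg.mono hsub).mul (hμc.mono hsub)
      obtain ⟨tm, htm, hmin'⟩ := isCompact_Icc.exists_isMinOn
        ⟨a, left_mem_Icc.2 hab.le⟩ hkc
      refine ⟨g tm * μ tm, mul_pos (hgpos tm (hsub htm)) (hμpos tm (hsub htm)), ?_⟩
      intro t ht
      exact hmin' ht
    by_cases hA2 : ∃ t₂, t₂ ∈ Ioo (0:ℝ) tstar ∧ ∃ xh, 0 < xh ∧ ρ t₂ < R xh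
    · -- sub-case A
      obtain ⟨t₂, ht₂, xh, hxh, hlt⟩ := hA2
      have ht₂pos : (0:ℝ) < t₂ := ht₂.1
      obtain ⟨m, hm, hmle⟩ := hboxmin (t₂/3) (t₂/2) (by positivity) (by linarith)
      have hd : (0:ℝ) < ρ t₂ - ρ (t₂/2) :=
        sub_pos.2 (hinc ⟨by positivity, by linarith [ht₂.2]⟩ ht₂ (by linarith))
      have hev := lap_ev_neg (fun t => (f t - (ρ t₂) * g t) * μ t) μ (hθmeas (ρ t₂)) hmμ
        hμpos hμmono (hθint (ρ t₂)) (t₂/3) (t₂/2) t₂ ((ρ t₂ - ρ (t₂/2)) * m)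
        (by positivity) (by linarith) (by linarith) (by positivity)
        (by
          intro t ht
          have ht0 : t ∈ Ioi (0:ℝ) := ht.1
          have hρle : ρ t ≤ ρ t₂ := hmono1 ⟨ht.1, le_trans ht.2 (le_of_lt ht₂.2)⟩
            ⟨ht₂pos, ht₂.2.le⟩ ht.2
          show (f t - ρ t₂ * g t) * μ t ≤ 0
          rw [hθsign (ρ t₂) t ht0]
          have := mul_pos (hgpos t ht0) (hμpos t ht0)
          nlinarith)
        (by
          intro t ht
          have ht0 : t ∈ Ioi (0:ℝ) := lt_of_lt_of_le (by positivity) ht.1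
          have hρle : ρ t ≤ ρ (t₂/2) := hmono1 ⟨ht0, by nlinarith [ht.2, ht₂.2]⟩
            ⟨by positivity, by linarith [ht₂.2]⟩ ht.2
          show (f t - ρ t₂ * g t) * μ t ≤ -((ρ t₂ - ρ (t₂/2)) * m)
          rw [hθsign (ρ t₂) t ht0]
          have hmt := hmle t ht
          nlinarith [hd, hm])
      obtain ⟨x₁, hx₁neg, hx₁ge⟩ := (hev.and (eventually_ge_atTop xh)).exists
      rw [hTid (ρ t₂) x₁ (lt_of_lt_of_le hxh hx₁ge)] at hx₁neg
      have hx₁pos : 0 < x₁ := lt_of_lt_of_le hxh hx₁ge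
      have hR₁ : R x₁ < ρ t₂ := by
        rw [hR]
        rw [div_lt_iff₀ (hBpos x₁ hx₁pos)]
        linarith
      have := hRmono xh x₁ hxh hx₁ge
      linarith
    · -- sub-case B
      push_neg at hA2
      have hρ0ne : (ρ '' Ioo 0 tstar).Nonempty :=
        ⟨ρ (tstar/2), tstar/2, ⟨by positivity, by linarith [half_lt_self hts]⟩, rfl⟩
      have hρ0bb : BddBelow (ρ '' Ioo 0 tstar) := by
        refine ⟨R 1, ?_⟩
        rintro v ⟨t, ht, rfl⟩
        exact hA2 t ht 1 one_pos
      set ρ0 : ℝ := sInf (ρ '' Ioo 0 tstar) with hρ0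
      have hρ0le : ∀ t ∈ Ioo (0:ℝ) tstar, ρ0 ≤ ρ t :=
        fun t ht => csInf_le hρ0bb ⟨t, ht, rfl⟩
      have hRleρ0 : ∀ x, 0 < x → R x ≤ ρ0 := by
        intro x hx
        apply le_csInf hρ0ne
        rintro v ⟨t, ht, rfl⟩
        exact hA2 t ht x hx
      -- now show R x > ρ0 for some x
      obtain ⟨m, hm, hmle⟩ := hboxmin (tstar/4) (tstar/2) (by positivity)
        (by linarith)
      have hdpos : (0:ℝ) < ρ (tstar/4) - ρ0 := by
        have h1 : ρ0 ≤ ρ (tstar/8) := hρ0le (tstar/8) ⟨by positivity, by linarith⟩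
        have h2 : ρ (tstar/8) < ρ (tstar/4) :=
          hinc ⟨by positivity, by linarith⟩ ⟨by positivity, by linarith⟩ (by linarith)
        linarith
      have hmeasneg : AEStronglyMeasurable (fun t => -((f t - ρ0 * g t) * μ t))
          (volume.restrict (Ioi 0)) := (hθmeas ρ0).neg
      have hintneg : ∀ w > (0:ℝ), IntegrableOn
          (fun t => -((f t - ρ0 * g t) * μ t) * Real.exp (-w * μ t)) (Ioi 0) := by
        intro w hw
        refine ((hθint ρ0 w hw).neg).congr ?_
        filter_upwards [] with t
        simp only [Pi.neg_apply]
        ring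
      have hev := lap_ev_neg (fun t => -((f t - ρ0 * g t) * μ t)) μ hmeasneg hmμ
        hμpos hμmono hintneg (tstar/4) (tstar/2) (tstar*3/4) ((ρ (tstar/4) - ρ0) * m)
        (by positivity) (by linarith) (by linarith) (by positivity)
        (by
          intro t ht
          have ht0 : t ∈ Ioi (0:ℝ) := ht.1
          have hρge : ρ0 ≤ ρ t := hρ0le t ⟨ht.1, by linarith [ht.2]⟩
          have hsign := hθsign ρ0 t ht0
          have := mul_pos (hgpos t ht0) (hμpos t ht0)
          show -((f t - ρ0 * g t) * μ t) ≤ 0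
          nlinarith)
        (by
          intro t ht
          have ht0 : t ∈ Ioi (0:ℝ) := lt_of_lt_of_le (by positivity) ht.1
          have hρge : ρ (tstar/4) ≤ ρ t := by
            rcases eq_or_lt_of_le ht.1 with heq | hlt
            · rw [← heq]
            · exact (hinc ⟨by positivity, by linarith⟩
                ⟨ht0, by linarith [ht.2]⟩ hlt).le
          have hsign := hθsign ρ0 t ht0
          have hmt := hmle t ht
          show -((f t - ρ0 * g t) * μ t) ≤ -((ρ (tstar/4) - ρ0) * m)
          nlinarith [hdpos, hm])
      obtain ⟨x₁, hx₁neg, hx₁ge⟩ := (hev.and (eventually_ge_atTop 1)).exists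
      have hx₁pos : (0:ℝ) < x₁ := lt_of_lt_of_le one_pos hx₁ge
      have hTneg2 : (∫ t in Ioi (0:ℝ), -((f t - ρ0 * g t) * μ t) * Real.exp (-x₁ * μ t))
          = -(∫ t in Ioi (0:ℝ), ((f t - ρ0 * g t) * μ t) * Real.exp (-x₁ * μ t)) := by
        rw [← integral_neg]
        congr 1 with t
        ring
      rw [hTneg2, hTid ρ0 x₁ hx₁pos] at hx₁neg
      have hR₁ : ρ0 < R x₁ := by
        rw [hR]
        rw [lt_div_iff₀ (hBpos x₁ hx₁pos)]
        linarith
      linarith [hRleρ0 x₁ hx₁pos]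
end

section
/- For v ≥ 1, the function h_v(t) = (cosh(vt) + v·sinh(vt)·sinh t) / ((cosh t + 1)·cosh(vt)) is strictly increasing on (0,∞), with lim_{t→0⁺} h_v(t) = 1/2 and lim_{t→∞} h_v(t) = v; in particular 1/2 < h_v(t) < v for all t > 0. -/
open Real Filter Set Topology

theorem stmt_10 (v : ℝ) (hv : 1 ≤ v) :
    StrictMonoOn
      (fun t => (Real.cosh (v * t) + v * Real.sinh (v * t) * Real.sinh t) /
        ((Real.cosh t + 1) * Real.cosh (v * t))) (Ioi 0) ∧
    Tendsto
      (fun t => (Real.cosh (v * t) + v * Real.sinh (v * t) * Real.sinh t) /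
        ((Real.cosh t + 1) * Real.cosh (v * t))) (𝓝[>] (0 : ℝ)) (𝓝 (1 / 2)) ∧
    Tendsto
      (fun t => (Real.cosh (v * t) + v * Real.sinh (v * t) * Real.sinh t) /
        ((Real.cosh t + 1) * Real.cosh (v * t))) atTop (𝓝 v) ∧
    ∀ t > (0 : ℝ),
      1 / 2 < (Real.cosh (v * t) + v * Real.sinh (v * t) * Real.sinh t) /
        ((Real.cosh t + 1) * Real.cosh (v * t)) ∧
      (Real.cosh (v * t) + v * Real.sinh (v * t) * Real.sinh t) /
        ((Real.cosh t + 1) * Real.cosh (v * t)) < v := by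
  have hv0 : 0 < v := lt_of_lt_of_le one_pos hv
  set f : ℝ → ℝ := fun t => (Real.cosh (v * t) + v * Real.sinh (v * t) * Real.sinh t) /
        ((Real.cosh t + 1) * Real.cosh (v * t)) with hf
  have hDpos : ∀ t : ℝ, 0 < (Real.cosh t + 1) * Real.cosh (v * t) := by
    intro t
    have := Real.cosh_pos t
    have := Real.cosh_pos (v * t)
    nlinarith
  -- continuity
  have hfc : Continuous f := by
    apply Continuous.div (by fun_prop) (by fun_prop)
    exact fun t => (hDpos t).ne'
  -- strict mono
  have hmono : StrictMonoOn f (Ioi 0) := by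
    apply strictMonoOn_of_deriv_pos (convex_Ioi 0) hfc.continuousOn
    intro x hx
    rw [interior_Ioi] at hx
    have hx0 : 0 < x := hx
    -- derivative computation
    have h1 : HasDerivAt (fun t : ℝ => v * t) v x := by
      simpa using (hasDerivAt_id x).const_mul v
    have hcv : HasDerivAt (fun t => Real.cosh (v * t)) (Real.sinh (v * x) * v) x := h1.cosh
    have hsv : HasDerivAt (fun t => Real.sinh (v * t)) (Real.cosh (v * x) * v) x := h1.sinh
    have hst : HasDerivAt Real.sinh (Real.cosh x) x := Real.hasDerivAt_sinh x
    have hct : HasDerivAt Real.cosh (Real.sinh x) x := Real.hasDerivAt_cosh x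
    have hN : HasDerivAt (fun t => Real.cosh (v * t) + v * Real.sinh (v * t) * Real.sinh t)
        (Real.sinh (v * x) * v +
          (v * (Real.cosh (v * x) * v) * Real.sinh x + v * Real.sinh (v * x) * Real.cosh x)) x :=
      hcv.add ((hsv.const_mul v).mul hst)
    have hD : HasDerivAt (fun t => (Real.cosh t + 1) * Real.cosh (v * t))
        (Real.sinh x * Real.cosh (v * x) + (Real.cosh x + 1) * (Real.sinh (v * x) * v)) x :=
      (hct.add_const 1).mul hcv
    have hfd := hN.div hD (hDpos x).ne'
    rw [(show HasDerivAt f _ x from hfd).deriv]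
    apply div_pos
    · -- numerator positivity
      set c := Real.cosh x
      set s := Real.sinh x
      set C := Real.cosh (v * x)
      set S := Real.sinh (v * x)
      have hs : 0 < s := Real.sinh_pos_iff.mpr hx0
      have hc : 1 < c := Real.one_lt_cosh.mpr hx0.ne'
      have hC : 1 ≤ C := Real.one_le_cosh _
      have hS : 0 < S := Real.sinh_pos_iff.mpr (by positivity)
      have hsub : Real.sinh (v * x - x) = S * c - C * s := Real.sinh_sub _ _
      have hsubnn : 0 ≤ Real.sinh (v * x - x) := by
        rw [Real.sinh_nonneg_iff]
        nlinarith
      have hc2 : c ^ 2 - s ^ 2 = 1 := Real.cosh_sq_sub_sinh_sq x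
      have hC2 : C ^ 2 - S ^ 2 = 1 := Real.cosh_sq_sub_sinh_sq (v * x)
      have e : (Real.sinh (v*x) * v +
            (v * (Real.cosh (v*x) * v) * Real.sinh x + v * Real.sinh (v*x) * Real.cosh x)) *
            ((Real.cosh x + 1) * Real.cosh (v*x)) -
          (Real.cosh (v*x) + v * Real.sinh (v*x) * Real.sinh x) *
            (Real.sinh x * Real.cosh (v*x) + (Real.cosh x + 1) * (Real.sinh (v*x) * v)) =
          C * (v * S * (c + 1) - s * C) + v ^ 2 * s * (c + 1) := by
        linear_combination (v * S * C) * hc2 + (v ^ 2 * s * (c + 1)) * hC2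
      rw [e]
      have h0 : 0 ≤ S * c - C * s := hsub ▸ hsubnn
      have h1' : s * C ≤ v * S * (c + 1) := by
        nlinarith [mul_nonneg (sub_nonneg.mpr hv) (mul_nonneg hS.le (by linarith : (0:ℝ) ≤ c + 1))]
      nlinarith [mul_nonneg (by positivity : (0:ℝ) ≤ C) (sub_nonneg.mpr h1'),
        mul_pos (mul_pos (mul_pos hv0 hv0) hs) (by linarith : (0:ℝ) < c + 1)]
    · positivity
  refine ⟨hmono, ?_, ?_, ?_⟩
  · -- limit at 0
    have : Tendsto f (𝓝 0) (𝓝 (f 0)) := hfc.tendsto 0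
    have hf0 : f 0 = 1 / 2 := by simp [hf]; norm_num
    rw [hf0] at this
    exact this.mono_left nhdsWithin_le_nhds
  · -- limit at infinity
    have htanh : Tendsto (fun t : ℝ => Real.sinh t / Real.cosh t) atTop (𝓝 1) := by
      have hexp : Tendsto (fun t : ℝ => Real.exp (-2 * t)) atTop (𝓝 0) := by
        have : Tendsto (fun t : ℝ => Real.exp t * Real.exp t) atTop atTop :=
          Real.tendsto_exp_atTop.atTop_mul_atTop₀ Real.tendsto_exp_atTop
        have h := this.inv_tendsto_atTop
        refine h.congr fun t => ?_
        simp only [Pi.inv_apply]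
        rw [← Real.exp_add, ← Real.exp_neg]
        norm_num
        ring
      have heq : ∀ t : ℝ, Real.sinh t / Real.cosh t =
          (1 - Real.exp (-2 * t)) / (1 + Real.exp (-2 * t)) := by
        intro t
        rw [Real.sinh_eq, Real.cosh_eq]
        have h2 : Real.exp (-2 * t) = Real.exp (-t) * Real.exp (-t) := by
          rw [← Real.exp_add]; ring_nf
        have h3 : Real.exp (-t) * Real.exp t = 1 := by rw [← Real.exp_add]; simp
        rw [div_div_div_comm, div_self (by norm_num : (2:ℝ) ≠ 0), div_one,
          div_eq_div_iff (by positivity) (by positivity)]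
        linear_combination (2 * Real.exp t) * h2 + (2 * Real.exp (-t)) * h3
      rw [show (1 : ℝ) = (1 - 0) / (1 + 0) by norm_num]
      exact Tendsto.congr (fun t => (heq t).symm)
        ((tendsto_const_nhds.sub hexp).div (tendsto_const_nhds.add hexp) (by norm_num))
    have hmul : Tendsto (fun t : ℝ => v * t) atTop atTop :=
      Tendsto.const_mul_atTop hv0 tendsto_id
    have htanhv : Tendsto (fun t : ℝ => Real.sinh (v * t) / Real.cosh (v * t)) atTop (𝓝 1) :=
      htanh.comp hmul
    have hcoshinv : Tendsto (fun t : ℝ => (Real.cosh t)⁻¹) atTop (𝓝 0) := by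
      apply Tendsto.inv_tendsto_atTop
      apply tendsto_atTop_mono (fun t => ?_) (Real.tendsto_exp_atTop.atTop_div_const two_pos)
      rw [Real.cosh_eq]
      have := Real.exp_pos (-t)
      linarith
    have heqf : ∀ t : ℝ, f t =
        ((Real.cosh t)⁻¹ + v * (Real.sinh (v * t) / Real.cosh (v * t)) * (Real.sinh t / Real.cosh t)) /
          (1 + (Real.cosh t)⁻¹) := by
      intro t
      have h1 : Real.cosh t ≠ 0 := (Real.cosh_pos t).ne'
      have h2 : Real.cosh (v * t) ≠ 0 := (Real.cosh_pos (v * t)).ne'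
      have h3 : Real.cosh t + 1 ≠ 0 := by positivity
      simp only [hf]
      field_simp
    have hnum : Tendsto (fun t : ℝ => (Real.cosh t)⁻¹ +
        v * (Real.sinh (v * t) / Real.cosh (v * t)) * (Real.sinh t / Real.cosh t)) atTop (𝓝 v) := by
      have := hcoshinv.add (((htanhv.const_mul v).mul htanh))
      simpa using this
    have hden : Tendsto (fun t : ℝ => 1 + (Real.cosh t)⁻¹) atTop (𝓝 1) := by
      simpa using tendsto_const_nhds.add hcoshinv
    have := hnum.div hden one_ne_zero
    rw [div_one] at this
    exact Tendsto.congr (fun t => (heqf t).symm) this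
  · -- pointwise bounds
    intro t ht
    have hs : 0 < Real.sinh t := Real.sinh_pos_iff.mpr ht
    have hc : 1 < Real.cosh t := Real.one_lt_cosh.mpr ht.ne'
    have hC : 1 ≤ Real.cosh (v * t) := Real.one_le_cosh _
    have hS : 0 < Real.sinh (v * t) := Real.sinh_pos_iff.mpr (by positivity)
    have hsub : Real.sinh (v * t - t) =
        Real.sinh (v * t) * Real.cosh t - Real.cosh (v * t) * Real.sinh t := Real.sinh_sub _ _
    have hsubnn : 0 ≤ Real.sinh (v * t - t) := by
      rw [Real.sinh_nonneg_iff]; nlinarith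
    have hc2 : Real.cosh t ^ 2 - Real.sinh t ^ 2 = 1 := Real.cosh_sq_sub_sinh_sq t
    have hcoshsub : Real.cosh (v * t - t) =
        Real.cosh (v * t) * Real.cosh t - Real.sinh (v * t) * Real.sinh t := Real.cosh_sub _ _
    have hcs1 : 1 ≤ Real.cosh (v * t - t) := Real.one_le_cosh _
    constructor
    · rw [lt_div_iff₀ (hDpos t)]
      nlinarith [mul_nonneg hsubnn hs.le, mul_pos hS hs]
    · rw [div_lt_iff₀ (hDpos t)]
      nlinarith
end

section
/- For v ∈ (1/2, 1), there exists t* ∈ (0,∞) such that the function h_v(t) = (cosh(vt) + v·sinh(vt)·sinh t) / ((cosh t + 1)·cosh(vt)) is strictly increasing on (0,t*) and strictly decreasing on (t*,∞); consequently 1/2 < h_v(t) ≤ h_v(t*) for all t > 0. -/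
set_option maxHeartbeats 1000000

open Real Filter Set Topology

private lemma hd_sinh (a x : ℝ) :
    HasDerivAt (fun y : ℝ => Real.sinh (a * y)) (a * Real.cosh (a * x)) x := by
  simpa [Function.comp_def, mul_comm] using
    (Real.hasDerivAt_sinh (a * x)).comp x ((hasDerivAt_id x).const_mul a)

private lemma hd_cosh (a x : ℝ) :
    HasDerivAt (fun y : ℝ => Real.cosh (a * y)) (a * Real.sinh (a * x)) x := by
  simpa [Function.comp_def, mul_comm] using
    (Real.hasDerivAt_cosh (a * x)).comp x ((hasDerivAt_id x).const_mul a)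

private lemma l1 {x : ℝ} (hx : 0 < x) : Real.sinh x < x * Real.cosh x := by
  have hc : ContinuousOn (fun y : ℝ => y * Real.cosh y - Real.sinh y) (Set.Ici 0) :=
    ((continuous_id.mul Real.continuous_cosh).sub Real.continuous_sinh).continuousOn
  have hm : StrictMonoOn (fun y : ℝ => y * Real.cosh y - Real.sinh y) (Set.Ici 0) := by
    apply strictMonoOn_of_deriv_pos (convex_Ici 0) hc
    intro y hy
    rw [interior_Ici] at hy
    have hD : HasDerivAt (fun y : ℝ => y * Real.cosh y - Real.sinh y)
        (1 * Real.cosh y + y * Real.sinh y - Real.cosh y) y :=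
      ((hasDerivAt_id y).mul (Real.hasDerivAt_cosh y)).sub (Real.hasDerivAt_sinh y)
    rw [hD.deriv]
    have hy' : (0:ℝ) < y := hy
    have hs : 0 < Real.sinh y := Real.sinh_pos_iff.mpr hy'
    nlinarith [mul_pos hy' hs]
  have := hm (Set.self_mem_Ici) (Set.mem_Ici.mpr hx.le) hx
  simpa using this

private lemma l1' {x : ℝ} (hx : 0 ≤ x) : Real.sinh x ≤ x * Real.cosh x := by
  rcases eq_or_lt_of_le hx with h | h
  · simp [← h]
  · exact (l1 h).le

private lemma lself {x : ℝ} (hx : 0 ≤ x) : x ≤ Real.sinh x := by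
  rcases eq_or_lt_of_le hx with h | h
  · simp [← h]
  · exact (Real.self_lt_sinh_iff.mpr h).le

private lemma l2 {x y : ℝ} (hx : 0 < x) (hxy : x < y) :
    y * Real.sinh x < x * Real.sinh y := by
  have hc : ContinuousOn (fun z : ℝ => x * Real.sinh z - z * Real.sinh x) (Set.Ici x) :=
    ((continuous_const.mul Real.continuous_sinh).sub
      (continuous_id.mul continuous_const)).continuousOn
  have hm : StrictMonoOn (fun z : ℝ => x * Real.sinh z - z * Real.sinh x) (Set.Ici x) := by
    apply strictMonoOn_of_deriv_pos (convex_Ici x) hc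
    intro z hz
    rw [interior_Ici] at hz
    have hD : HasDerivAt (fun z : ℝ => x * Real.sinh z - z * Real.sinh x)
        (x * Real.cosh z - 1 * Real.sinh x) z :=
      ((Real.hasDerivAt_sinh z).const_mul x).sub ((hasDerivAt_id z).mul_const (Real.sinh x))
    rw [hD.deriv]
    have h1 : Real.sinh x < x * Real.cosh x := l1 hx
    have h2 : Real.cosh x ≤ Real.cosh z := by
      rw [Real.cosh_le_cosh, abs_of_pos hx, abs_of_pos (hx.trans hz)]
      exact hz.le
    nlinarith [Real.cosh_pos x]
  have := hm (Set.self_mem_Ici) (Set.mem_Ici.mpr hxy.le) hxy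
  simp only [sub_self] at this
  nlinarith [this]

private lemma l3 {x y : ℝ} (hx : 0 < x) (hxy : x < y) :
    x * Real.cosh x * Real.sinh y < y * Real.sinh x * Real.cosh y := by
  have key := l2 (x := y - x) (y := x + y) (by linarith) (by linarith)
  rw [Real.sinh_sub, Real.sinh_add] at key
  nlinarith [key]

private lemma l4 {x d : ℝ} (hx : 0 ≤ x) (hd : 0 ≤ d) :
    Real.sinh x + d * Real.cosh x ≤ Real.sinh (x + d) := by
  rw [Real.sinh_add]
  have h1 : 1 ≤ Real.cosh d := Real.one_le_cosh d
  have h2 : d ≤ Real.sinh d := lself hd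
  have h3 : 0 ≤ Real.sinh x := Real.sinh_nonneg_iff.mpr hx
  have h4 : 0 < Real.cosh x := Real.cosh_pos x
  nlinarith [mul_nonneg h3 (sub_nonneg.mpr h1), mul_nonneg h4.le (sub_nonneg.mpr h2)]

private lemma l6 {d : ℝ} (hd : 0 ≤ d) : Real.cosh d ≤ 1 + d * Real.sinh d := by
  have h2 := Real.cosh_two_mul (d / 2)
  have h3 := Real.sinh_two_mul (d / 2)
  rw [show 2 * (d / 2) = d by ring] at h2 h3
  have h4 := Real.cosh_sq_sub_sinh_sq (d / 2)
  have h5 : Real.sinh (d / 2) ≤ (d / 2) * Real.cosh (d / 2) := l1' (by linarith)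
  have h6 : 0 ≤ Real.sinh (d / 2) := Real.sinh_nonneg_iff.mpr (by linarith)
  have h7 : 0 < Real.cosh (d / 2) := Real.cosh_pos _
  nlinarith [mul_nonneg h6 (sub_nonneg.mpr h5)]

private lemma l5 {x d : ℝ} (hx : 0 ≤ x) (hd : 0 ≤ d) :
    Real.sinh (x + d) ≤ Real.sinh x + d * Real.cosh (x + d) := by
  rw [Real.sinh_add, Real.cosh_add]
  have h1 : Real.sinh d ≤ d * Real.cosh d := l1' hd
  have h2 : Real.cosh d ≤ 1 + d * Real.sinh d := l6 hd
  have h3 : 0 ≤ Real.sinh x := Real.sinh_nonneg_iff.mpr hx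
  have h4 : 0 < Real.cosh x := Real.cosh_pos x
  nlinarith [mul_nonneg h3 (sub_nonneg.mpr h2), mul_nonneg h4.le (sub_nonneg.mpr h1)]

private lemma Qnn {v : ℝ} (hv1 : 1/2 < v) (hv2 : v < 1) {t : ℝ} (ht : 0 ≤ t) :
    0 ≤ (4*v+1)^2 * Real.sinh ((4*v+1)*t) - 2*v*(2*v+2)^2 * Real.sinh ((2*v+2)*t)
      + 4*v^2*(2*v+2) * Real.sinh (2*v*t) - (4*v+1) * Real.sinh t := by
  have hBpos : (0:ℝ) ≤ (2*v+2)*t := by nlinarith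
  have hCpos : (0:ℝ) ≤ 2*v*t := by nlinarith
  have hchB : 0 < Real.cosh ((2*v+2)*t) := Real.cosh_pos _
  have f1 : Real.sinh ((2*v+2)*t) + ((2*v-1)*t) * Real.cosh ((2*v+2)*t)
      ≤ Real.sinh ((4*v+1)*t) := by
    have := l4 (x := (2*v+2)*t) (d := (2*v-1)*t) hBpos (by nlinarith)
    rwa [show (2*v+2)*t + (2*v-1)*t = (4*v+1)*t by ring] at this
  have f2 : Real.sinh ((2*v+2)*t) ≤ Real.sinh (2*v*t) + (2*t) * Real.cosh ((2*v+2)*t) := by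
    have := l5 (x := 2*v*t) (d := 2*t) hCpos (by linarith)
    rwa [show 2*v*t + 2*t = (2*v+2)*t by ring] at this
  have f3 : Real.sinh t ≤ Real.sinh (2*v*t) := Real.sinh_le_sinh.mpr (by nlinarith)
  have f4 : 0 ≤ Real.sinh t := Real.sinh_nonneg_iff.mpr ht
  have f5 : Real.sinh ((2*v+2)*t) ≤ Real.sinh ((4*v+1)*t) :=
    Real.sinh_le_sinh.mpr (by nlinarith)
  have f6 : Real.sinh (2*v*t) ≤ Real.sinh ((2*v+2)*t) := Real.sinh_le_sinh.mpr (by nlinarith)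
  have part1 : 0 ≤ (8*v^2+1) * Real.sinh (2*v*t) - (4*v+1) * Real.sinh t := by
    nlinarith [mul_nonneg (show (0:ℝ) ≤ 8*v^2 - 4*v by nlinarith) (f4.trans f3)]
  have part2 : 0 ≤ (4*v+1)^2 * (Real.sinh ((4*v+1)*t) - Real.sinh ((2*v+2)*t))
      - (2*v*(2*v+2)^2 - (4*v+1)^2) * (Real.sinh ((2*v+2)*t) - Real.sinh (2*v*t)) := by
    rcases le_or_gt (2*v*(2*v+2)^2 - (4*v+1)^2) 0 with h | h
    · nlinarith [mul_nonneg (show (0:ℝ) ≤ (4*v+1)^2 by positivity) (sub_nonneg.mpr f5),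
        mul_nonneg (neg_nonneg.mpr h) (sub_nonneg.mpr f6)]
    · have hpoly : 2 * (2*v*(2*v+2)^2 - (4*v+1)^2) ≤ (4*v+1)^2 * (2*v-1) := by
        nlinarith [mul_nonneg (show (0:ℝ) ≤ 2*v-1 by linarith)
          (show (0:ℝ) ≤ 8*v^2+4*v-1 by nlinarith)]
      have htchB : 0 ≤ t * Real.cosh ((2*v+2)*t) := mul_nonneg ht hchB.le
      have h1 := mul_le_mul_of_nonneg_left
        (show Real.sinh ((2*v+2)*t) - Real.sinh (2*v*t) ≤ 2*t*Real.cosh ((2*v+2)*t) by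
          linarith) h.le
      have h2 := mul_le_mul_of_nonneg_left
        (show (2*v-1)*t*Real.cosh ((2*v+2)*t)
            ≤ Real.sinh ((4*v+1)*t) - Real.sinh ((2*v+2)*t) by linarith)
        (show (0:ℝ) ≤ (4*v+1)^2 by positivity)
      have h3 := mul_le_mul_of_nonneg_right hpoly htchB
      nlinarith [h1, h2, h3]
  nlinarith [part1, part2]

private lemma Pnn {v : ℝ} (hv1 : 1/2 < v) (hv2 : v < 1) {t : ℝ} (ht : 0 ≤ t) :
    0 ≤ Real.sinh ((4*v+1)*t) - 2*v * Real.sinh ((2*v+2)*t)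
      + (2*v+2) * Real.sinh (2*v*t) - (4*v+1) * Real.sinh t := by
  set P1 : ℝ → ℝ := fun t => (4*v+1) * Real.cosh ((4*v+1)*t)
      - 2*v * ((2*v+2) * Real.cosh ((2*v+2)*t))
      + (2*v+2) * (2*v * Real.cosh (2*v*t)) - (4*v+1) * Real.cosh t with hP1
  have hP1d : ∀ x : ℝ, HasDerivAt P1
      ((4*v+1) * ((4*v+1) * Real.sinh ((4*v+1)*x))
        - 2*v * ((2*v+2) * ((2*v+2) * Real.sinh ((2*v+2)*x)))
        + (2*v+2) * (2*v * (2*v * Real.sinh (2*v*x))) - (4*v+1) * Real.sinh x) x := by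
    intro x
    exact ((((hd_cosh (4*v+1) x).const_mul (4*v+1)).sub
      (((hd_cosh (2*v+2) x).const_mul (2*v+2)).const_mul (2*v))).add
      (((hd_cosh (2*v) x).const_mul (2*v)).const_mul (2*v+2))).sub
      ((Real.hasDerivAt_cosh x).const_mul (4*v+1))
  have hP1c : Continuous P1 := by
    rw [hP1]; fun_prop
  have hP1mono : MonotoneOn P1 (Set.Ici 0) := by
    apply monotoneOn_of_deriv_nonneg (convex_Ici 0) hP1c.continuousOn
    · intro x hx
      exact (hP1d x).differentiableAt.differentiableWithinAt
    · intro x hx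
      rw [interior_Ici] at hx
      rw [(hP1d x).deriv]
      have := Qnn hv1 hv2 (le_of_lt hx)
      nlinarith [this]
  have hP10 : P1 0 = 0 := by
    simp only [hP1, mul_zero, Real.cosh_zero]
    ring
  have hP1nr : ∀ x : ℝ, 0 ≤ x → 0 ≤ P1 x := by
    intro x hx
    have := hP1mono Set.self_mem_Ici (Set.mem_Ici.mpr hx) hx
    rwa [hP10] at this
  set P0 : ℝ → ℝ := fun t => Real.sinh ((4*v+1)*t) - 2*v * Real.sinh ((2*v+2)*t)
      + (2*v+2) * Real.sinh (2*v*t) - (4*v+1) * Real.sinh t with hP0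
  have hP0d : ∀ x : ℝ, HasDerivAt P0 (P1 x) x := by
    intro x
    exact (((hd_sinh (4*v+1) x).sub ((hd_sinh (2*v+2) x).const_mul (2*v))).add
      ((hd_sinh (2*v) x).const_mul (2*v+2))).sub
      ((Real.hasDerivAt_sinh x).const_mul (4*v+1))
  have hP0c : Continuous P0 := by
    rw [hP0]; fun_prop
  have hP0mono : MonotoneOn P0 (Set.Ici 0) := by
    apply monotoneOn_of_deriv_nonneg (convex_Ici 0) hP0c.continuousOn
    · intro x hx
      exact (hP0d x).differentiableAt.differentiableWithinAt
    · intro x hx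
      rw [interior_Ici] at hx
      rw [(hP0d x).deriv]
      exact hP1nr x (le_of_lt hx)
  have hP00 : P0 0 = 0 := by
    simp only [hP0, mul_zero, Real.sinh_zero]
    ring
  have := hP0mono Set.self_mem_Ici (Set.mem_Ici.mpr ht) ht
  rw [hP00] at this
  exact this

private lemma Tneg {lam c t : ℝ} (hl : 0 < lam) (hlc : lam < c) (ht : 0 < t) :
    lam * Real.cosh (lam*t) * Real.sinh (c*t) < c * Real.sinh (lam*t) * Real.cosh (c*t) := by
  have h := l3 (x := lam*t) (y := c*t) (mul_pos hl ht) (by nlinarith)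
  have h2 : t * (lam * Real.cosh (lam*t) * Real.sinh (c*t))
      < t * (c * Real.sinh (lam*t) * Real.cosh (c*t)) := by nlinarith [h]
  exact lt_of_mul_lt_mul_left h2 ht.le

private lemma Tcomp {v : ℝ} (hv1 : 1/2 < v) (hv2 : v < 1) {t : ℝ} (ht : 0 < t) :
    2*v * Real.cosh (2*v*t) * Real.sinh ((2*v+1)*t)
      - (2*v+1) * Real.sinh (2*v*t) * Real.cosh ((2*v+1)*t)
    ≤ Real.cosh t * Real.sinh ((2*v+1)*t)
      - (2*v+1) * Real.sinh t * Real.cosh ((2*v+1)*t) := by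
  have hP := Pnn hv1 hv2 ht.le
  rw [show (4*v+1)*t = 2*v*t + (2*v*t + t) by ring,
    show (2*v+2)*t = 2*v*t + (t + t) by ring] at hP
  simp only [Real.sinh_add, Real.cosh_add] at hP
  rw [show (2*v+1)*t = 2*v*t + t by ring]
  simp only [Real.sinh_add, Real.cosh_add]
  have e1 := congrArg (fun z : ℝ => (2+2*v) * Real.sinh (2*v*t) * z)
    (Real.cosh_sq_sub_sinh_sq t)
  have e2 := congrArg (fun z : ℝ => (4*v+1) * Real.sinh t * z)
    (Real.cosh_sq_sub_sinh_sq (2*v*t))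
  simp only [mul_one] at e1 e2
  nlinarith [hP, e1, e2]

private lemma Aneg {v : ℝ} (hv1 : 1/2 < v) (hv2 : v < 1) {t : ℝ} (ht : 0 < t) :
    (v^2/2*(2*Real.cosh (2*t)) + (v^2-1/2)*Real.cosh t + v/2*(2*v*Real.cosh (2*v*t))
      + (v-1)/4*((2*v+1)*Real.cosh ((2*v+1)*t)) + (v+1)/4*((2*v-1)*Real.cosh ((2*v-1)*t)))
      * Real.sinh ((2*v+1)*t)
    - (v^2/2*Real.sinh (2*t) + (v^2-1/2)*Real.sinh t + v/2*Real.sinh (2*v*t)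
      + (v-1)/4*Real.sinh ((2*v+1)*t) + (v+1)/4*Real.sinh ((2*v-1)*t))
      * ((2*v+1) * Real.cosh ((2*v+1)*t)) < 0 := by
  have hv0 : (0:ℝ) < v := by linarith
  have hT2 := Tneg (lam := 2) (c := 2*v+1) (t := t) (by norm_num) (by linarith) ht
  have hT1 := Tneg (lam := 1) (c := 2*v+1) (t := t) (by norm_num) (by linarith) ht
  rw [one_mul, one_mul] at hT1
  have hTm := Tneg (lam := 2*v-1) (c := 2*v+1) (t := t) (by linarith) (by linarith) ht
  have hTc := Tcomp hv1 hv2 ht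
  have d2 : 0 < v^2/2 * ((2*v+1) * Real.sinh (2*t) * Real.cosh ((2*v+1)*t)
      - 2 * Real.cosh (2*t) * Real.sinh ((2*v+1)*t)) :=
    mul_pos (by positivity) (sub_pos.mpr hT2)
  have d1 : 0 < (2*v^2+v-1)/2 * ((2*v+1) * Real.sinh t * Real.cosh ((2*v+1)*t)
      - Real.cosh t * Real.sinh ((2*v+1)*t)) :=
    mul_pos (by nlinarith) (sub_pos.mpr hT1)
  have dm : 0 < (v+1)/4 * ((2*v+1) * Real.sinh ((2*v-1)*t) * Real.cosh ((2*v+1)*t)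
      - (2*v-1) * Real.cosh ((2*v-1)*t) * Real.sinh ((2*v+1)*t)) :=
    mul_pos (by linarith) (sub_pos.mpr hTm)
  have dc : 0 ≤ v/2 * ((Real.cosh t * Real.sinh ((2*v+1)*t)
      - (2*v+1) * Real.sinh t * Real.cosh ((2*v+1)*t))
      - (2*v * Real.cosh (2*v*t) * Real.sinh ((2*v+1)*t)
      - (2*v+1) * Real.sinh (2*v*t) * Real.cosh ((2*v+1)*t))) :=
    mul_nonneg (by linarith) (sub_nonneg.mpr hTc)
  nlinarith [d2, d1, dm, dc]

private noncomputable def Gg (v t : ℝ) : ℝ :=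
  v^2/2*Real.sinh (2*t) + (v^2-1/2)*Real.sinh t + v/2*Real.sinh (2*v*t)
    + (v-1)/4*Real.sinh ((2*v+1)*t) + (v+1)/4*Real.sinh ((2*v-1)*t)

private noncomputable def Gg' (v t : ℝ) : ℝ :=
  v^2/2*(2*Real.cosh (2*t)) + (v^2-1/2)*Real.cosh t + v/2*(2*v*Real.cosh (2*v*t))
    + (v-1)/4*((2*v+1)*Real.cosh ((2*v+1)*t)) + (v+1)/4*((2*v-1)*Real.cosh ((2*v-1)*t))

private lemma hGd (v t : ℝ) : HasDerivAt (Gg v) (Gg' v t) t := by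
  unfold Gg Gg'
  exact ((((((hd_sinh 2 t).const_mul (v^2/2)).add
    ((Real.hasDerivAt_sinh t).const_mul (v^2-1/2))).add
    ((hd_sinh (2*v) t).const_mul (v/2))).add
    ((hd_sinh (2*v+1) t).const_mul ((v-1)/4))).add
    ((hd_sinh (2*v-1) t).const_mul ((v+1)/4)))

private lemma hGcont (v : ℝ) : Continuous (Gg v) := by
  unfold Gg; fun_prop

private lemma keyid (v t : ℝ) :
    (v * Real.sinh (v*t) + ((v * (v * Real.cosh (v*t))) * Real.sinh t
        + (v * Real.sinh (v*t)) * Real.cosh t))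
      * ((Real.cosh t + 1) * Real.cosh (v*t))
    - (Real.cosh (v*t) + v * Real.sinh (v*t) * Real.sinh t)
      * (Real.sinh t * Real.cosh (v*t) + (Real.cosh t + 1) * (v * Real.sinh (v*t)))
    = Gg v t := by
  unfold Gg
  rw [Real.sinh_two_mul, show 2*v*t = 2*(v*t) by ring, Real.sinh_two_mul,
      show (2*v+1)*t = v*t + (v*t + t) by ring, show (2*v-1)*t = v*t + (v*t - t) by ring]
  simp only [Real.sinh_add, Real.cosh_add, Real.sinh_sub, Real.cosh_sub]
  linear_combination (v * Real.sinh (v*t) * Real.cosh (v*t)) * Real.cosh_sq_sub_sinh_sq t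
    + (v^2 * Real.sinh t * (Real.cosh t + 1) - Real.sinh t / 2)
      * Real.cosh_sq_sub_sinh_sq (v*t)

theorem stmt_11 (v : ℝ) (hv : v ∈ Ioo (1 / 2 : ℝ) 1) :
    ∃ tstar > (0 : ℝ),
      StrictMonoOn
        (fun t => (Real.cosh (v * t) + v * Real.sinh (v * t) * Real.sinh t) /
          ((Real.cosh t + 1) * Real.cosh (v * t))) (Ioo 0 tstar) ∧
      StrictAntiOn
        (fun t => (Real.cosh (v * t) + v * Real.sinh (v * t) * Real.sinh t) /
          ((Real.cosh t + 1) * Real.cosh (v * t))) (Ioi tstar) ∧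
      ∀ t > (0 : ℝ),
        1 / 2 < (Real.cosh (v * t) + v * Real.sinh (v * t) * Real.sinh t) /
          ((Real.cosh t + 1) * Real.cosh (v * t)) ∧
        (Real.cosh (v * t) + v * Real.sinh (v * t) * Real.sinh t) /
          ((Real.cosh t + 1) * Real.cosh (v * t)) ≤
        (Real.cosh (v * tstar) + v * Real.sinh (v * tstar) * Real.sinh tstar) /
          ((Real.cosh tstar + 1) * Real.cosh (v * tstar)) := by
  obtain ⟨hv1, hv2⟩ := hv
  have hv0 : (0:ℝ) < v := by linarith
  -- positivity of the denominator
  have hDval : ∀ s : ℝ, 0 < (Real.cosh s + 1) * Real.cosh (v*s) := fun s =>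
    mul_pos (by nlinarith [Real.cosh_pos s]) (Real.cosh_pos (v*s))
  -- derivative of F
  have hFd : ∀ u : ℝ, HasDerivAt
      (fun t => (Real.cosh (v * t) + v * Real.sinh (v * t) * Real.sinh t) /
        ((Real.cosh t + 1) * Real.cosh (v * t)))
      (Gg v u / ((Real.cosh u + 1) * Real.cosh (v*u))^2) u := by
    intro u
    have hN : HasDerivAt (fun t : ℝ => Real.cosh (v*t) + v * Real.sinh (v*t) * Real.sinh t)
        (v * Real.sinh (v*u) + ((v * (v * Real.cosh (v*u))) * Real.sinh u
          + (v * Real.sinh (v*u)) * Real.cosh u)) u :=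
      (hd_cosh v u).add (((hd_sinh v u).const_mul v).mul (Real.hasDerivAt_sinh u))
    have hD : HasDerivAt (fun t : ℝ => (Real.cosh t + 1) * Real.cosh (v*t))
        (Real.sinh u * Real.cosh (v*u) + (Real.cosh u + 1) * (v * Real.sinh (v*u))) u :=
      ((Real.hasDerivAt_cosh u).add_const 1).mul (hd_cosh v u)
    have h := hN.div hD (ne_of_gt (hDval u))
    have hnum := keyid v u
    rw [hnum] at h
    exact h
  -- positivity of sinh((2v+1)t)
  have hsinhc : ∀ t : ℝ, 0 < t → 0 < Real.sinh ((2*v+1)*t) := fun t ht =>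
    Real.sinh_pos_iff.mpr (by nlinarith)
  -- R = G / sinh((2v+1)t), strictly decreasing on (0,∞)
  set R : ℝ → ℝ := fun t => Gg v t / Real.sinh ((2*v+1)*t) with hRdef
  have hRd : ∀ t : ℝ, 0 < t → HasDerivAt R
      ((Gg' v t * Real.sinh ((2*v+1)*t) - Gg v t * ((2*v+1) * Real.cosh ((2*v+1)*t)))
        / Real.sinh ((2*v+1)*t)^2) t := fun t ht =>
    (hGd v t).div (hd_sinh (2*v+1) t) (ne_of_gt (hsinhc t ht))
  have hRanti : StrictAntiOn R (Ioi 0) := by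
    apply strictAntiOn_of_deriv_neg (convex_Ioi 0)
    · exact fun t ht => ((hRd t ht).differentiableAt.continuousAt).continuousWithinAt
    · intro t ht
      rw [interior_Ioi] at ht
      rw [(hRd t ht).deriv]
      apply div_neg_of_neg_of_pos
      · have h := Aneg hv1 hv2 ht
        unfold Gg Gg'
        exact h
      · exact pow_pos (hsinhc t ht) 2
  -- a point t0 where G > 0
  have hG'0 : Gg' v 0 = 4*v^2 - 1 := by
    unfold Gg'
    simp only [mul_zero, Real.cosh_zero, mul_one]
    ring
  have hG0d : HasDerivAt (Gg v) (4*v^2-1) 0 := hG'0 ▸ hGd v 0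
  have hGzero : Gg v 0 = 0 := by
    unfold Gg
    simp only [mul_zero, Real.sinh_zero]
    ring
  have h4 : (0:ℝ) < 4*v^2-1 := by nlinarith
  have hev : ∀ᶠ x in 𝓝[≠] (0:ℝ), 0 < slope (Gg v) 0 x :=
    (hasDerivAt_iff_tendsto_slope.mp hG0d).eventually (eventually_gt_nhds h4)
  have hle : 𝓝[>] (0:ℝ) ≤ 𝓝[≠] (0:ℝ) :=
    nhdsWithin_mono 0 (fun x hx => ne_of_gt hx)
  obtain ⟨t0, hslope0, ht0⟩ := ((hev.filter_mono hle).and eventually_mem_nhdsWithin).exists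
  have ht0 : (0:ℝ) < t0 := ht0
  have hGt0 : 0 < Gg v t0 := by
    have hs : slope (Gg v) 0 t0 = Gg v t0 / t0 := by
      rw [slope_def_field, hGzero]
      simp
    rw [hs] at hslope0
    rcases div_pos_iff.mp hslope0 with ⟨h1, _⟩ | ⟨_, h2⟩
    · exact h1
    · linarith
  -- a point t1 where G < 0
  obtain ⟨t1, ht1def⟩ : ∃ t1 : ℝ, t1 = Real.log (16/(1-v)) / (2*v-1) := ⟨_, rfl⟩
  have h1v : (0:ℝ) < 1 - v := by linarith
  have hlogpos : 0 < Real.log (16/(1-v)) := Real.log_pos (by rw [lt_div_iff₀ h1v]; linarith)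
  have ht1 : 0 < t1 := by
    rw [ht1def]
    exact div_pos hlogpos (by linarith)
  have hexp : Real.exp ((2*v-1)*t1) = 16/(1-v) := by
    rw [show (2*v-1)*t1 = Real.log (16/(1-v)) by
      rw [ht1def, mul_comm, div_mul_cancel₀ _ (show (2*v-1) ≠ 0 by linarith)]]
    exact Real.exp_log (by positivity)
  have s_ub : ∀ x : ℝ, Real.sinh x ≤ Real.exp x / 2 := fun x => by
    rw [Real.sinh_eq]
    have := Real.exp_pos (-x)
    linarith
  have s_lb : ∀ x : ℝ, 0 ≤ x → (Real.exp x - 1)/2 ≤ Real.sinh x := fun x hx => by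
    rw [Real.sinh_eq]
    have : Real.exp (-x) ≤ 1 := Real.exp_le_one_iff.mpr (by linarith)
    linarith
  have he2one : 1 ≤ Real.exp (2*t1) := by
    have := Real.exp_le_exp.mpr (show (0:ℝ) ≤ 2*t1 by linarith)
    rwa [Real.exp_zero] at this
  have he2pos : 0 < Real.exp (2*t1) := Real.exp_pos _
  have hGt1 : Gg v t1 < 0 := by
    have b1 : Real.sinh (2*t1) ≤ Real.exp (2*t1)/2 := s_ub _
    have b2 : Real.sinh t1 ≤ Real.exp (2*t1)/2 := by
      have := Real.exp_le_exp.mpr (show t1 ≤ 2*t1 by linarith)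
      linarith [s_ub t1]
    have b2' : 0 ≤ Real.sinh t1 := Real.sinh_nonneg_iff.mpr ht1.le
    have b3 : Real.sinh (2*v*t1) ≤ Real.exp (2*t1)/2 := by
      have := Real.exp_le_exp.mpr (show 2*v*t1 ≤ 2*t1 by nlinarith)
      linarith [s_ub (2*v*t1)]
    have b4 : Real.sinh ((2*v-1)*t1) ≤ Real.exp (2*t1)/2 := by
      have := Real.exp_le_exp.mpr (show (2*v-1)*t1 ≤ 2*t1 by nlinarith)
      linarith [s_ub ((2*v-1)*t1)]
    have btop : (16/(1-v) * Real.exp (2*t1) - 1)/2 ≤ Real.sinh ((2*v+1)*t1) := by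
      have harg : (2*v+1)*t1 = (2*v-1)*t1 + 2*t1 := by ring
      have h := s_lb ((2*v+1)*t1) (by nlinarith)
      rwa [harg, Real.exp_add, hexp, ← harg] at h
    unfold Gg
    have c1 : v^2/2 * Real.sinh (2*t1) ≤ v^2/2 * (Real.exp (2*t1)/2) :=
      mul_le_mul_of_nonneg_left b1 (by positivity)
    have c1' : v^2/2 * (Real.exp (2*t1)/2) ≤ 1/2 * (Real.exp (2*t1)/2) :=
      mul_le_mul_of_nonneg_right (by nlinarith) (by positivity)
    have c2 : (v^2-1/2) * Real.sinh t1 ≤ 1/2 * Real.sinh t1 :=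
      mul_le_mul_of_nonneg_right (by nlinarith) b2'
    have c2' : 1/2 * Real.sinh t1 ≤ 1/2 * (Real.exp (2*t1)/2) := by linarith
    have c3 : v/2 * Real.sinh (2*v*t1) ≤ v/2 * (Real.exp (2*t1)/2) :=
      mul_le_mul_of_nonneg_left b3 (by positivity)
    have c3' : v/2 * (Real.exp (2*t1)/2) ≤ 1/2 * (Real.exp (2*t1)/2) :=
      mul_le_mul_of_nonneg_right (by linarith) (by positivity)
    have c4 : (v+1)/4 * Real.sinh ((2*v-1)*t1) ≤ (v+1)/4 * (Real.exp (2*t1)/2) :=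
      mul_le_mul_of_nonneg_left b4 (by positivity)
    have c4' : (v+1)/4 * (Real.exp (2*t1)/2) ≤ 1/2 * (Real.exp (2*t1)/2) :=
      mul_le_mul_of_nonneg_right (by linarith) (by positivity)
    have ctop : (v-1)/4 * Real.sinh ((2*v+1)*t1)
        ≤ (v-1)/4 * ((16/(1-v) * Real.exp (2*t1) - 1)/2) :=
      mul_le_mul_of_nonpos_left btop (by linarith)
    have ctop' : (v-1)/4 * ((16/(1-v) * Real.exp (2*t1) - 1)/2)
        = -2 * Real.exp (2*t1) + (1-v)/8 := by
      field_simp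
      ring
    linarith
  -- t0 < t1 and the intermediate zero tstar
  have hR0 : 0 < R t0 := div_pos hGt0 (hsinhc t0 ht0)
  have hR1 : R t1 < 0 := div_neg_of_neg_of_pos hGt1 (hsinhc t1 ht1)
  have ht01 : t0 < t1 := by
    by_contra hcon
    push_neg at hcon
    rcases eq_or_lt_of_le hcon with h | h
    · rw [← h] at hR0; linarith
    · have := hRanti (mem_Ioi.mpr ht1) (mem_Ioi.mpr ht0) h
      linarith
  obtain ⟨ts, hts, hGts⟩ := intermediate_value_Icc' ht01.le
    ((hGcont v).continuousOn) ⟨hGt1.le, hGt0.le⟩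
  have htspos : 0 < ts := lt_of_lt_of_le ht0 hts.1
  have hRts : R ts = 0 := by
    rw [hRdef]
    simp only [hGts, zero_div]
  -- sign of G on both sides of tstar
  have hGpos : ∀ u : ℝ, 0 < u → u < ts → 0 < Gg v u := by
    intro u hu hults
    have h := hRanti (mem_Ioi.mpr hu) (mem_Ioi.mpr htspos) hults
    rw [hRts] at h
    rcases div_pos_iff.mp h with ⟨h1, _⟩ | ⟨_, h2⟩
    · exact h1
    · exact absurd (hsinhc u hu) (by linarith)
  have hGneg : ∀ u : ℝ, ts < u → Gg v u < 0 := by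
    intro u hu
    have hupos : 0 < u := htspos.trans hu
    have h := hRanti (mem_Ioi.mpr htspos) (mem_Ioi.mpr hupos) hu
    rw [hRts] at h
    rcases div_neg_iff.mp h with ⟨_, h2⟩ | ⟨h1, _⟩
    · exact absurd (hsinhc u hupos) (by linarith)
    · exact h1
  -- monotonicity of F
  have hFcont : Continuous (fun t => (Real.cosh (v * t) + v * Real.sinh (v * t) * Real.sinh t) /
      ((Real.cosh t + 1) * Real.cosh (v * t))) := by
    apply Continuous.div
    · fun_prop
    · fun_prop
    · exact fun s => ne_of_gt (hDval s)
  have hmonoIoc : StrictMonoOn (fun t => (Real.cosh (v * t) + v * Real.sinh (v * t) * Real.sinh t) /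
      ((Real.cosh t + 1) * Real.cosh (v * t))) (Ioc 0 ts) := by
    apply strictMonoOn_of_deriv_pos (convex_Ioc 0 ts) hFcont.continuousOn
    intro u hu
    rw [interior_Ioc] at hu
    rw [(hFd u).deriv]
    exact div_pos (hGpos u hu.1 hu.2) (pow_pos (hDval u) 2)
  have hmono : StrictMonoOn (fun t => (Real.cosh (v * t) + v * Real.sinh (v * t) * Real.sinh t) /
      ((Real.cosh t + 1) * Real.cosh (v * t))) (Ioo 0 ts) :=
    hmonoIoc.mono Ioo_subset_Ioc_self
  have hantiIci : StrictAntiOn (fun t => (Real.cosh (v * t) + v * Real.sinh (v * t) * Real.sinh t) /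
      ((Real.cosh t + 1) * Real.cosh (v * t))) (Ici ts) := by
    apply strictAntiOn_of_deriv_neg (convex_Ici ts) hFcont.continuousOn
    intro u hu
    rw [interior_Ici] at hu
    rw [(hFd u).deriv]
    exact div_neg_of_neg_of_pos (hGneg u hu) (pow_pos (hDval u) 2)
  have hanti : StrictAntiOn (fun t => (Real.cosh (v * t) + v * Real.sinh (v * t) * Real.sinh t) /
      ((Real.cosh t + 1) * Real.cosh (v * t))) (Ioi ts) :=
    hantiIci.mono Ioi_subset_Ici_self
  -- the lower bound 1/2
  have hhalf : ∀ u : ℝ, 0 < u →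
      1/2 < (Real.cosh (v * u) + v * Real.sinh (v * u) * Real.sinh u) /
        ((Real.cosh u + 1) * Real.cosh (v * u)) := by
    intro u hu
    rw [lt_div_iff₀ (hDval u)]
    have h1 : 0 < Real.sinh (v*u - u/2) := Real.sinh_pos_iff.mpr (by nlinarith)
    rw [Real.sinh_sub] at h1
    have hsh : Real.sinh u = 2 * Real.sinh (u/2) * Real.cosh (u/2) := by
      have := Real.sinh_two_mul (u/2)
      rwa [show 2*(u/2) = u by ring] at this
    have hch : Real.cosh u = Real.cosh (u/2)^2 + Real.sinh (u/2)^2 := by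
      have := Real.cosh_two_mul (u/2)
      rwa [show 2*(u/2) = u by ring] at this
    have hpyth := Real.cosh_sq_sub_sinh_sq (u/2)
    have h2 : 0 < Real.sinh (u/2) := Real.sinh_pos_iff.mpr (by linarith)
    have h3 : 0 < Real.cosh (u/2) := Real.cosh_pos _
    have h4 : 0 < Real.cosh (v*u) := Real.cosh_pos _
    have h5 : 0 < Real.sinh (v*u) := Real.sinh_pos_iff.mpr (by nlinarith)
    rw [hsh, hch]
    nlinarith [mul_pos h2 h1, mul_pos h2 (mul_pos h5 h3)]
  refine ⟨ts, htspos, hmono, hanti, fun t ht => ⟨hhalf t ht, ?_⟩⟩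
  rcases lt_trichotomy t ts with h | h | h
  · exact (hmonoIoc (mem_Ioc.mpr ⟨ht, h.le⟩) (mem_Ioc.mpr ⟨htspos, le_refl ts⟩) h).le
  · rw [h]
  · exact (hantiIci (mem_Ici.mpr (le_refl ts)) (mem_Ici.mpr h.le) h).le
end

section
/- For v ∈ (0, 1/2), there exists t* ∈ (0,∞) such that the function h_v(t) = (cosh(vt) + v·sinh(vt)·sinh t) / ((cosh t + 1)·cosh(vt)) is strictly decreasing on (0,t*) and strictly increasing on (t*,∞); consequently h_v(t*) ≤ h_v(t) < 1/2 for all t > 0. -/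
open Real Filter Set Topology

set_option maxHeartbeats 1000000

lemma claim3_alg (v s c S C : ℝ) (hv0 : 0 < v) (hs : 0 < s) (hS : 0 < S)
    (hc : c^2 = 1 + s^2) (hC : C^2 = 1 + S^2) (hc1 : 1 ≤ c) (hC1 : 1 ≤ C)
    (hzero : S * c^2 = (C+1) * (v*s*c + v^2*S))
    (hCkey : 2*c^2 - 1 < C) :
    0 < v^2*S^2 + v^2*(C+1)*(c^2+s^2+C) - C*c^2 - v*S*s*c := by
  set A := v*s*c*(C+1) with hA
  have hApos : 0 < A := by positivity
  have hCpos : (0:ℝ) < C + 1 := by linarith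
  have hC1s : 1 < C := by nlinarith [sq_nonneg S]
  have hc1s : 1 < c := by nlinarith [sq_nonneg s]
  have h1 : S*c^2 - A = v^2*S*(C+1) := by rw [hA]; linarith [hzero]
  have P1 : A^2*(C-1) = c^2*(c^2-1)*S*(S*c^2 - A) := by
    rw [h1, hA]
    linear_combination (v^2*c^2*(C+1)*s^2) * hC - (v^2*c^2*(C+1)*S^2) * hc
  have hg : 0 < (C-1)*(2*c^2+C-2)^2 - (c^2-1)*(2*C-1)*(2*c^2+3*C-3) := by
    have t1 : 0 ≤ (C-1)^2 * (C-1-2*(c^2-1)) := by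
      apply mul_nonneg (sq_nonneg _); linarith
    have t2 : 0 ≤ ((C-1)-(c^2-1))*((C-1)+(c^2-1)) := by
      apply mul_nonneg <;> nlinarith
    have t3 : 0 ≤ (c^2-1)*(C-1) := by nlinarith
    nlinarith [t1, t2, t3]
  have hq1 : (0:ℝ) < 2*c^2+3*C-3 := by nlinarith
  have hq2 : (0:ℝ) < 2*c^2+C-2 := by nlinarith
  have F1 : A*(2*c^2+3*C-3) < S*c^2*(2*c^2+C-2) := by
    by_contra hcon
    push_neg at hcon
    have hsq : (S*c^2*(2*c^2+C-2))^2 ≤ (A*(2*c^2+3*C-3))^2 := by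
      have h0 : 0 ≤ S*c^2*(2*c^2+C-2) := by positivity
      exact pow_le_pow_left₀ h0 hcon 2
    have h2 : (C-1) * (S*c^2*(2*c^2+C-2))^2 ≤ (C-1) * (A*(2*c^2+3*C-3))^2 :=
      mul_le_mul_of_nonneg_left hsq (by linarith)
    have h3 : c^2*(c^2-1)*S*(2*c^2+3*C-3) * (S*c^2*(2*c^2+C-2)) ≤
        c^2*(c^2-1)*S*(2*c^2+3*C-3) * (A*(2*c^2+3*C-3)) := by
      apply mul_le_mul_of_nonneg_left hcon
      have hx : (0:ℝ) ≤ c^2-1 := by nlinarith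
      have := hS.le
      have := hq1.le
      nlinarith [mul_nonneg (mul_nonneg (mul_nonneg (sq_nonneg c) hx) hS.le) hq1.le]
    have hP1' : (C-1)*(A*(2*c^2+3*C-3))^2 + c^2*(c^2-1)*S*(2*c^2+3*C-3)*(A*(2*c^2+3*C-3))
        = c^2*(c^2-1)*S*(S*c^2)*(2*c^2+3*C-3)^2 := by
      linear_combination ((2*c^2+3*C-3)^2) * P1
    have hSc4g : 0 < S^2*c^4*((C-1)*(2*c^2+C-2)^2 - (c^2-1)*(2*C-1)*(2*c^2+3*C-3)) := by
      have : (0:ℝ) < S^2*c^4 := by positivity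
      exact mul_pos this hg
    nlinarith [h2, h3, hP1', hSc4g]
  have step1 : 0 < (S*c^2 - A)*(2*c^2+3*C-3) - S*c^2*(2*C-1) := by nlinarith [F1]
  rw [h1] at step1
  have step2 : 0 < v^2*(C+1)*(2*c^2+3*C-3) - c^2*(2*C-1) := by
    by_contra hcon
    push_neg at hcon
    nlinarith [step1, mul_le_mul_of_nonneg_left hcon hS.le]
  have keyid : (C+1) * (v^2*S^2 + v^2*(C+1)*(c^2+s^2+C) - C*c^2 - v*S*s*c)
      = (C+1) * (v^2*(C+1)*(2*c^2+3*C-3) - c^2*(2*C-1)) := by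
    rw [hA] at h1
    linear_combination (S) * hzero + (c^2 - 2*v^2*(C+1)) * hC + (-(v^2)*(C+1)^2) * hc
  nlinarith [keyid, mul_pos hCpos step2]

noncomputable def Mf (v t : ℝ) : ℝ :=
  (Real.cosh t + 1) * (v * Real.sinh (v*t) * Real.cosh (v*t) + v^2 * Real.sinh t)
    - Real.sinh t * (Real.cosh (v*t))^2

noncomputable def Mf' (v t : ℝ) : ℝ :=
  v^2*(Real.sinh t)^2
    + v^2*(Real.cosh t + 1)*((Real.cosh (v*t))^2 + (Real.sinh (v*t))^2 + Real.cosh t)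
    - Real.cosh t * (Real.cosh (v*t))^2
    - v*(Real.sinh t)*(Real.sinh (v*t))*(Real.cosh (v*t))

lemma hasDerivAt_Mf (v t : ℝ) : HasDerivAt (Mf v) (Mf' v t) t := by
  have hvt : HasDerivAt (fun t : ℝ => v * t) v t := by
    simpa using (hasDerivAt_id t).const_mul v
  have hs : HasDerivAt (fun t => Real.sinh (v*t)) (Real.cosh (v*t) * v) t :=
    (Real.hasDerivAt_sinh (v*t)).comp t hvt
  have hcv : HasDerivAt (fun t => Real.cosh (v*t)) (Real.sinh (v*t) * v) t :=
    (Real.hasDerivAt_cosh (v*t)).comp t hvt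
  have hS : HasDerivAt Real.sinh (Real.cosh t) t := Real.hasDerivAt_sinh t
  have hC : HasDerivAt Real.cosh (Real.sinh t) t := Real.hasDerivAt_cosh t
  have h1 : HasDerivAt (fun t => Real.cosh t + 1) (Real.sinh t) t := hC.add_const 1
  have h2 := ((hs.const_mul v).mul hcv).add (hS.const_mul (v^2))
  have h4 := h1.mul h2
  have h6 := h4.sub (hS.mul (hcv.pow 2))
  refine h6.congr_deriv (Eq.symm ?_)
  unfold Mf'
  simp only [Pi.mul_apply, Pi.add_apply, Pi.pow_apply]
  ring

lemma mf_continuous (v : ℝ) : Continuous (Mf v) := by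
  unfold Mf; fun_prop

lemma hasDerivAt_h (v t : ℝ) :
    HasDerivAt (fun t => (Real.cosh (v * t) + v * Real.sinh (v * t) * Real.sinh t) /
      ((Real.cosh t + 1) * Real.cosh (v * t)))
      (Mf v t / (((Real.cosh t + 1) * Real.cosh (v*t))^2)) t := by
  have hvt : HasDerivAt (fun t : ℝ => v * t) v t := by
    simpa using (hasDerivAt_id t).const_mul v
  have hs : HasDerivAt (fun t => Real.sinh (v*t)) (Real.cosh (v*t) * v) t :=
    (Real.hasDerivAt_sinh (v*t)).comp t hvt
  have hcv : HasDerivAt (fun t => Real.cosh (v*t)) (Real.sinh (v*t) * v) t :=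
    (Real.hasDerivAt_cosh (v*t)).comp t hvt
  have hS : HasDerivAt Real.sinh (Real.cosh t) t := Real.hasDerivAt_sinh t
  have hC : HasDerivAt Real.cosh (Real.sinh t) t := Real.hasDerivAt_cosh t
  have hN : HasDerivAt (fun t => Real.cosh (v*t) + v * Real.sinh (v*t) * Real.sinh t)
      (Real.sinh (v*t) * v + ((Real.cosh (v*t) * v) * v * Real.sinh t
        + v * Real.sinh (v*t) * Real.cosh t)) t := by
    have := hcv.add (((hs.const_mul v).mul hS))
    refine this.congr_deriv (Eq.symm ?_)
    ring
  have hD : HasDerivAt (fun t => (Real.cosh t + 1) * Real.cosh (v*t))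
      (Real.sinh t * Real.cosh (v*t) + (Real.cosh t + 1) * (Real.sinh (v*t) * v)) t :=
    (hC.add_const 1).mul hcv
  have hDne : ((Real.cosh t + 1) * Real.cosh (v*t)) ≠ 0 := by positivity
  have := hN.div hD hDne
  refine this.congr_deriv (Eq.symm ?_)
  congr 1
  unfold Mf
  have p1 := Real.cosh_sq_sub_sinh_sq t
  have p2 := Real.cosh_sq_sub_sinh_sq (v*t)
  linear_combination (-(v*Real.sinh (v*t)*Real.cosh (v*t))) * p1
    + (-(v^2*Real.sinh t*(Real.cosh t+1))) * p2

lemma local_sign {f : ℝ → ℝ} {x d : ℝ} (hf : HasDerivAt f d x) (h0 : f x = 0) (hd : 0 < d) :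
    ∃ δ > 0, (∀ y, x < y → y < x + δ → 0 < f y) ∧ ∀ y, x - δ < y → y < x → f y < 0 := by
  have hslope := hasDerivAt_iff_tendsto_slope.mp hf
  have hev : ∀ᶠ y in 𝓝[≠] x, 0 < slope f x y := (tendsto_order.1 hslope).1 0 hd
  rw [eventually_nhdsWithin_iff, Metric.eventually_nhds_iff] at hev
  obtain ⟨δ, hδ, hball⟩ := hev
  have key : ∀ y, y ≠ x → |y - x| < δ → 0 < (f y) / (y - x) := by
    intro y hyx hdist
    have := hball (show dist y x < δ by rwa [Real.dist_eq]) (by simpa using hyx)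
    rw [slope_def_field, h0, sub_zero] at this
    exact this
  refine ⟨δ, hδ, fun y h1 h2 => ?_, fun y h1 h2 => ?_⟩
  · have hy := key y (by linarith) (by rw [abs_of_pos] <;> linarith)
    have : 0 < y - x := by linarith
    have := mul_pos hy this
    rwa [div_mul_cancel₀] at this
    linarith
  · have hy := key y (by linarith) (by rw [abs_of_neg] <;> linarith)
    have hneg : y - x < 0 := by linarith
    rcases lt_trichotomy (f y) 0 with h | h | h
    · exact h
    · exfalso; rw [h, zero_div] at hy; exact lt_irrefl 0 hy
    · exfalso
      have : f y / (y - x) < 0 := div_neg_of_pos_of_neg h hneg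
      linarith

lemma claim1 (v : ℝ) (hv0 : 0 < v) (hv : v < 1/2) :
    ∃ ε > 0, ∀ t ∈ Set.Ioo (0:ℝ) ε, Mf v t < 0 := by
  have h0 : Mf v 0 = 0 := by simp [Mf]
  have hd : HasDerivAt (Mf v) (4*v^2 - 1) 0 := by
    have h := hasDerivAt_Mf v 0
    convert h using 1
    simp [Mf']
    ring
  have hslope := hasDerivAt_iff_tendsto_slope.mp hd
  have hneg : (4*v^2 - 1) < 0 := by nlinarith
  have hev : ∀ᶠ y in 𝓝[≠] (0:ℝ), slope (Mf v) 0 y < 0 :=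
    (tendsto_order.1 hslope).2 0 hneg
  rw [eventually_nhdsWithin_iff, Metric.eventually_nhds_iff] at hev
  obtain ⟨ε, hε, hball⟩ := hev
  refine ⟨ε, hε, fun t ht => ?_⟩
  obtain ⟨ht0, htε⟩ := ht
  have := hball (show dist t 0 < ε by rw [Real.dist_eq, sub_zero, abs_of_pos ht0]; exact htε)
    (by simpa using ne_of_gt ht0)
  rw [slope_def_field, h0, sub_zero, sub_zero] at this
  have := mul_neg_of_neg_of_pos this ht0
  rwa [div_mul_cancel₀] at this
  exact ne_of_gt ht0

lemma claim2 (v : ℝ) (hv0 : 0 < v) (hv : v < 1/2) :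
    ∃ T > 0, 0 < Mf v T := by
  have h12v : 0 < 1 - 2*v := by linarith
  set T := max 1 ((Real.log (2/v^2) + 1)/(1-2*v)) with hT
  have hT1 : (1:ℝ) ≤ T := le_max_left _ _
  have hTpos : 0 < T := by linarith
  have hTlog : Real.log (2/v^2) + 1 ≤ (1-2*v)*T := by
    have h := le_max_right 1 ((Real.log (2/v^2) + 1)/(1-2*v))
    rw [div_le_iff₀ h12v] at h
    linarith [h]
  have hexp : 2/v^2 < Real.exp ((1-2*v)*T) := by
    have h1 : Real.exp (Real.log (2/v^2)) = 2/v^2 := Real.exp_log (by positivity)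
    calc 2/v^2 = Real.exp (Real.log (2/v^2)) := h1.symm
    _ < Real.exp ((1-2*v)*T) := Real.exp_lt_exp.mpr (by linarith)
  have hcle : Real.cosh (v*T) ≤ Real.exp (v*T) := by
    rw [Real.cosh_eq]
    have := Real.exp_le_exp.mpr (show -(v*T) ≤ v*T by nlinarith)
    linarith
  have he2 : (Real.cosh (v*T))^2 ≤ Real.exp (2*v*T) := by
    have h1 : Real.exp (v*T) * Real.exp (v*T) = Real.exp (2*v*T) := by
      rw [← Real.exp_add]; congr 1; ring
    nlinarith [Real.cosh_pos (v*T), Real.exp_pos (v*T)]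
  have heT : Real.exp T = Real.exp ((1-2*v)*T) * Real.exp (2*v*T) := by
    rw [← Real.exp_add]; congr 1; ring
  have h5 : 2 * Real.exp (2*v*T) < v^2 * Real.exp ((1-2*v)*T) * Real.exp (2*v*T) := by
    have hv2 : v^2 * (2/v^2) = 2 := by field_simp
    have := mul_lt_mul_of_pos_left hexp (show (0:ℝ) < v^2 by positivity)
    rw [hv2] at this
    nlinarith [Real.exp_pos (2*v*T)]
  have hC : Real.exp T / 2 ≤ Real.cosh T + 1 := by
    rw [Real.cosh_eq]
    have := Real.exp_pos (-T)
    linarith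
  have h6 : 0 < v^2*(Real.cosh T + 1) - (Real.cosh (v*T))^2 := by
    have : Real.exp (2*v*T) < v^2 * Real.exp T / 2 := by rw [heT]; nlinarith
    nlinarith [mul_le_mul_of_nonneg_left hC (show (0:ℝ) ≤ v^2 by positivity)]
  refine ⟨T, hTpos, ?_⟩
  have hS : 0 < Real.sinh T := Real.sinh_pos_iff.mpr hTpos
  have hs : 0 < Real.sinh (v*T) := Real.sinh_pos_iff.mpr (by positivity)
  have hc : 0 < Real.cosh (v*T) := Real.cosh_pos _
  have hCp : 0 < Real.cosh T + 1 := by positivity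
  unfold Mf
  nlinarith [mul_pos hS h6, mul_pos (mul_pos (mul_pos hv0 hs) hc) hCp]

lemma hA_lem (v t : ℝ) (hv0 : 0 < v) (hv : v < 1/2) (ht : 0 < t) :
    2*v*Real.sinh (v*t)*(Real.cosh t + 1) < Real.sinh t * Real.cosh (v*t) := by
  have hu : t = 2*(t/2) := by ring
  have hC : Real.cosh t = Real.cosh (t/2)^2 + Real.sinh (t/2)^2 := by
    conv_lhs => rw [hu]
    exact Real.cosh_two_mul _
  have hS : Real.sinh t = 2 * Real.sinh (t/2) * Real.cosh (t/2) := by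
    conv_lhs => rw [hu]
    rw [Real.sinh_two_mul]
  have hP : Real.cosh (t/2)^2 - Real.sinh (t/2)^2 = 1 := Real.cosh_sq_sub_sinh_sq _
  have hkey : Real.sinh (v*t) * Real.cosh (t/2) < Real.sinh (t/2) * Real.cosh (v*t) := by
    have h1 : Real.sinh (v*t - t/2) < 0 := Real.sinh_neg_iff.mpr (by nlinarith)
    rw [Real.sinh_sub] at h1
    linarith
  have hsv : 0 < Real.sinh (v*t) := Real.sinh_pos_iff.mpr (by positivity)
  have hcu : 0 < Real.cosh (t/2) := Real.cosh_pos _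
  have h2 : 2*v*(Real.sinh (v*t) * Real.cosh (t/2)) < Real.sinh (t/2) * Real.cosh (v*t) := by
    nlinarith [mul_pos hsv hcu]
  have hP1 : Real.cosh t + 1 = 2*Real.cosh (t/2)^2 := by linarith
  rw [hP1, hS]
  nlinarith [mul_lt_mul_of_pos_right h2 hcu]

lemma h_lt_half (v t : ℝ) (hv0 : 0 < v) (hv : v < 1/2) (ht : 0 < t) :
    (Real.cosh (v * t) + v * Real.sinh (v * t) * Real.sinh t) /
      ((Real.cosh t + 1) * Real.cosh (v * t)) < 1 / 2 := by
  have hD : 0 < (Real.cosh t + 1) * Real.cosh (v * t) := by positivity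
  rw [div_lt_iff₀ hD]
  have hA := hA_lem v t hv0 hv ht
  have hS : 0 < Real.sinh t := Real.sinh_pos_iff.mpr ht
  have hCS : Real.cosh t ^2 = 1 + Real.sinh t^2 := Real.cosh_sq' _
  have hC1 : 1 ≤ Real.cosh t := Real.one_le_cosh t
  -- from hA : 2*v*sinh(vt)*(C+1) < S*c ; multiply by S/(C+1): 2*v*sinh(vt)*S < (C-1)*c
  have hCp : 0 < Real.cosh t + 1 := by positivity
  have h1 : 2*v*Real.sinh (v*t)*Real.sinh t * (Real.cosh t + 1) <
      Real.sinh t * Real.cosh (v*t) * Real.sinh t := by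
    nlinarith [mul_lt_mul_of_pos_right hA hS]
  have h2 : Real.sinh t * Real.cosh (v*t) * Real.sinh t
      = (Real.cosh t - 1) * Real.cosh (v*t) * (Real.cosh t + 1) := by
    nlinarith [hCS]
  have h3 : 2*v*Real.sinh (v*t)*Real.sinh t < (Real.cosh t - 1) * Real.cosh (v*t) := by
    rw [h2] at h1
    have := lt_of_mul_lt_mul_right h1 hCp.le
    linarith
  nlinarith [Real.cosh_pos (v*t)]

lemma claim3 (v t : ℝ) (hv0 : 0 < v) (hv : v < 1/2) (ht : 0 < t)
    (hzero : Mf v t = 0) : 0 < Mf' v t := by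
  have hs : 0 < Real.sinh (v*t) := Real.sinh_pos_iff.mpr (by positivity)
  have hS : 0 < Real.sinh t := Real.sinh_pos_iff.mpr ht
  have hc : (Real.cosh (v*t))^2 = 1 + (Real.sinh (v*t))^2 := Real.cosh_sq' _
  have hC : (Real.cosh t)^2 = 1 + (Real.sinh t)^2 := Real.cosh_sq' _
  have hc1 : 1 ≤ Real.cosh (v*t) := Real.one_le_cosh _
  have hC1 : 1 ≤ Real.cosh t := Real.one_le_cosh _
  have hz : Real.sinh t * (Real.cosh (v*t))^2
      = (Real.cosh t + 1) * (v*Real.sinh (v*t)*Real.cosh (v*t) + v^2*Real.sinh t) := by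
    unfold Mf at hzero; linarith
  have hCkey : 2*(Real.cosh (v*t))^2 - 1 < Real.cosh t := by
    have habs : |2*(v*t)| < |t| := by
      rw [abs_of_pos (by positivity), abs_of_pos ht]; nlinarith
    have h1 : Real.cosh (2*(v*t)) < Real.cosh t := Real.cosh_lt_cosh.mpr habs
    have h2 : Real.cosh (2*(v*t)) = (Real.cosh (v*t))^2 + (Real.sinh (v*t))^2 :=
      Real.cosh_two_mul _
    nlinarith
  have := claim3_alg v (Real.sinh (v*t)) (Real.cosh (v*t)) (Real.sinh t) (Real.cosh t)
    hv0 hs hS hc hC hc1 hC1 hz hCkey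
  unfold Mf'
  linarith

theorem stmt_12 (v : ℝ) (hv : v ∈ Ioo (0 : ℝ) (1 / 2)) :
    ∃ tstar > (0 : ℝ),
      StrictAntiOn
        (fun t => (Real.cosh (v * t) + v * Real.sinh (v * t) * Real.sinh t) /
          ((Real.cosh t + 1) * Real.cosh (v * t))) (Ioo 0 tstar) ∧
      StrictMonoOn
        (fun t => (Real.cosh (v * t) + v * Real.sinh (v * t) * Real.sinh t) /
          ((Real.cosh t + 1) * Real.cosh (v * t))) (Ioi tstar) ∧
      ∀ t > (0 : ℝ),
        (Real.cosh (v * tstar) + v * Real.sinh (v * tstar) * Real.sinh tstar) /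
          ((Real.cosh tstar + 1) * Real.cosh (v * tstar)) ≤
        (Real.cosh (v * t) + v * Real.sinh (v * t) * Real.sinh t) /
          ((Real.cosh t + 1) * Real.cosh (v * t)) ∧
        (Real.cosh (v * t) + v * Real.sinh (v * t) * Real.sinh t) /
          ((Real.cosh t + 1) * Real.cosh (v * t)) < 1 / 2 := by
  obtain ⟨hv0, hv2⟩ := hv
  obtain ⟨ε, hε, hMneg⟩ := claim1 v hv0 hv2
  obtain ⟨T, hT0, hMT⟩ := claim2 v hv0 hv2
  set ε' := ε/2 with hε'
  have hε'0 : 0 < ε' := by positivity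
  have hMε' : Mf v ε' < 0 := hMneg ε' ⟨hε'0, by linarith⟩
  have hε'T : ε' < T := by
    by_contra hcon
    push_neg at hcon
    have := hMneg T ⟨hT0, by linarith⟩
    linarith
  have hcontM := mf_continuous v
  set Z : Set ℝ := {x : ℝ | ε' ≤ x ∧ Mf v x = 0} with hZ
  have hZcl : IsClosed Z := by
    have : Z = Ici ε' ∩ (Mf v)⁻¹' {0} := by
      ext x; simp [hZ, Set.mem_setOf_eq]
    rw [this]
    exact isClosed_Ici.inter (isClosed_singleton.preimage hcontM)
  have hZne : Z.Nonempty := by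
    have hIVT := intermediate_value_Ioo hε'T.le hcontM.continuousOn
    have h0mem : (0:ℝ) ∈ Ioo (Mf v ε') (Mf v T) := ⟨hMε', hMT⟩
    obtain ⟨z, hz, hz0⟩ := hIVT h0mem
    exact ⟨z, hz.1.le, hz0⟩
  have hZbdd : BddBelow Z := ⟨ε', fun x hx => hx.1⟩
  obtain ⟨htε', htzero⟩ := hZcl.csInf_mem hZne hZbdd
  set tstar := sInf Z with htstar
  have ht0 : 0 < tstar := lt_of_lt_of_le hε'0 htε'
  have hlb : ∀ x ∈ Z, tstar ≤ x := fun x hx => csInf_le hZbdd hx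
  -- M negative on (0, tstar)
  have Mneg : ∀ x, 0 < x → x < tstar → Mf v x < 0 := by
    intro x hx hxt
    by_cases hxe : x ≤ ε'
    · exact hMneg x ⟨hx, by linarith⟩
    · push_neg at hxe
      rcases lt_trichotomy (Mf v x) 0 with h | h | h
      · exact h
      · exact absurd (hlb x ⟨hxe.le, h⟩) (by linarith)
      · exfalso
        obtain ⟨z, hz, hz0⟩ := intermediate_value_Ioo hxe.le hcontM.continuousOn
          (show (0:ℝ) ∈ Ioo (Mf v ε') (Mf v x) from ⟨hMε', h⟩)
        have := hlb z ⟨hz.1.le, hz0⟩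
        linarith [hz.2]
  -- M positive on (tstar, ∞)
  have Mpos : ∀ x, tstar < x → 0 < Mf v x := by
    have hd3 := claim3 v tstar hv0 hv2 ht0 htzero
    obtain ⟨δ, hδ, hR, hL⟩ := local_sign (hasDerivAt_Mf v tstar) htzero hd3
    intro y hy
    by_contra hcon
    push_neg at hcon
    set p := tstar + (min δ (y - tstar))/2 with hp
    have hmin : 0 < min δ (y - tstar) := lt_min hδ (by linarith)
    have hp1 : tstar < p := by rw [hp]; linarith
    have hp2 : p < tstar + δ := by
      have := min_le_left δ (y - tstar); rw [hp]; linarith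
    have hp3 : p < y := by
      have := min_le_right δ (y - tstar); rw [hp]; linarith
    have hMp : 0 < Mf v p := hR p hp1 hp2
    set W : Set ℝ := {x : ℝ | x ∈ Icc p y ∧ Mf v x ≤ 0} with hW
    have hWcl : IsClosed W := by
      have : W = Icc p y ∩ (Mf v)⁻¹' (Iic 0) := by
        ext x; simp [hW, Set.mem_setOf_eq]
      rw [this]
      exact isClosed_Icc.inter (isClosed_Iic.preimage hcontM)
    have hWne : W.Nonempty := ⟨y, ⟨hp3.le, le_refl y⟩, hcon⟩
    have hWbdd : BddBelow W := ⟨p, fun x hx => hx.1.1⟩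
    obtain ⟨⟨hc0p, hc0y⟩, hc0M⟩ := hWcl.csInf_mem hWne hWbdd
    set c0 := sInf W with hc0
    have hWlb : ∀ x ∈ W, c0 ≤ x := fun x hx => csInf_le hWbdd hx
    have hpc0 : p < c0 := by
      rcases eq_or_lt_of_le hc0p with h | h
      · exfalso; rw [← h] at hc0M; linarith
      · exact h
    have hleft : ∀ x, p ≤ x → x < c0 → 0 < Mf v x := by
      intro x h1 h2
      by_contra hcx
      push_neg at hcx
      have := hWlb x ⟨⟨h1, by linarith⟩, hcx⟩
      linarith
    rcases lt_or_eq_of_le hc0M with h | h'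
    · obtain ⟨z, hz, hz0⟩ := intermediate_value_Ioo' hpc0.le hcontM.continuousOn
        (show (0:ℝ) ∈ Ioo (Mf v c0) (Mf v p) from ⟨h, hMp⟩)
      have := hleft z hz.1.le hz.2
      linarith
    · have h : Mf v c0 = 0 := h'
      have hc00 : 0 < c0 := by linarith
      have hd3' := claim3 v c0 hv0 hv2 hc00 h
      obtain ⟨δ2, hδ2, hR2, hL2⟩ := local_sign (hasDerivAt_Mf v c0) h hd3'
      set x := max p (c0 - δ2/2) with hx
      have hx1 : x < c0 := max_lt hpc0 (by linarith)
      have hx2 : p ≤ x := le_max_left _ _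
      have hx3 : c0 - δ2 < x := by
        have := le_max_right p (c0 - δ2/2); linarith
      have := hL2 x hx3 hx1
      have := hleft x hx2 hx1
      linarith
  -- derivative facts
  have hderiv : ∀ x, deriv (fun t => (Real.cosh (v * t) + v * Real.sinh (v * t) * Real.sinh t) /
      ((Real.cosh t + 1) * Real.cosh (v * t))) x
      = Mf v x / (((Real.cosh x + 1) * Real.cosh (v*x))^2) := fun x => (hasDerivAt_h v x).deriv
  have hcont : Continuous (fun t => (Real.cosh (v * t) + v * Real.sinh (v * t) * Real.sinh t) /
      ((Real.cosh t + 1) * Real.cosh (v * t))) := by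
    apply Continuous.div (by fun_prop) (by fun_prop)
    intro x; positivity
  refine ⟨tstar, ht0, ?_, ?_, ?_⟩
  · apply strictAntiOn_of_deriv_neg (convex_Ioo _ _) hcont.continuousOn
    intro x hx
    rw [interior_Ioo] at hx
    rw [hderiv]
    exact div_neg_of_neg_of_pos (Mneg x hx.1 hx.2) (by positivity)
  · apply strictMonoOn_of_deriv_pos (convex_Ioi _) hcont.continuousOn
    intro x hx
    rw [interior_Ioi] at hx
    rw [hderiv]
    exact div_pos (Mpos x hx) (by positivity)
  · intro t ht
    constructor
    · rcases lt_trichotomy t tstar with h | h | h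
      · have SA : StrictAntiOn (fun t => (Real.cosh (v * t) + v * Real.sinh (v * t) * Real.sinh t) /
            ((Real.cosh t + 1) * Real.cosh (v * t))) (Icc t tstar) := by
          apply strictAntiOn_of_deriv_neg (convex_Icc _ _) hcont.continuousOn
          intro x hx
          rw [interior_Icc] at hx
          rw [hderiv]
          exact div_neg_of_neg_of_pos (Mneg x (by linarith [hx.1]) hx.2) (by positivity)
        have := SA ⟨le_refl t, h.le⟩ ⟨h.le, le_refl tstar⟩ h
        simpa using this.le
      · rw [h]
      · have SM : StrictMonoOn (fun t => (Real.cosh (v * t) + v * Real.sinh (v * t) * Real.sinh t) /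
            ((Real.cosh t + 1) * Real.cosh (v * t))) (Icc tstar t) := by
          apply strictMonoOn_of_deriv_pos (convex_Icc _ _) hcont.continuousOn
          intro x hx
          rw [interior_Icc] at hx
          rw [hderiv]
          exact div_pos (Mpos x hx.1) (by positivity)
        have := SM ⟨le_refl tstar, h.le⟩ ⟨h.le, le_refl t⟩ h
        simpa using this.le
    · exact h_lt_half v t hv0 hv2 ht
end

section
/- Let v ≥ 0 with v ≠ 1/2 and let K_v(x) = ∫_0^∞ e^{−x·cosh t}·cosh(vt) dt for x > 0. Then for every x > 0, −x − max(v, 1/2) < x·K_v′(x)/K_v(x) < −x − min(v, 1/2). -/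
set_option maxHeartbeats 1000000

open Real Filter Set MeasureTheory Topology

private lemma mycosh_le_exp {t : ℝ} (ht : 0 ≤ t) : Real.cosh t ≤ Real.exp t := by
  rw [Real.cosh_eq]
  have h1 : Real.exp (-t) ≤ Real.exp t := Real.exp_le_exp.2 (by linarith)
  linarith

private lemma quad_le_cosh {t : ℝ} (ht : 0 ≤ t) : 1 + t ^ 2 / 2 ≤ Real.cosh t := by
  have h2 : Real.cosh t = Real.cosh (t / 2) ^ 2 + Real.sinh (t / 2) ^ 2 := by
    have := Real.cosh_two_mul (t / 2)
    rw [show 2 * (t / 2) = t by ring] at this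
    exact this
  have h3 : t / 2 ≤ Real.sinh (t / 2) := Real.self_le_sinh_iff.2 (by linarith)
  have h4 : Real.cosh (t / 2) ^ 2 = Real.sinh (t / 2) ^ 2 + 1 := Real.cosh_sq (t / 2)
  nlinarith [Real.sinh_nonneg_iff.2 (show (0:ℝ) ≤ t/2 by linarith)]

private lemma point_bound (v : ℝ) (hv : 0 ≤ v) (n : ℕ) {x t : ℝ} (hx : 0 < x) (ht : 0 ≤ t) :
    Real.cosh t ^ n * (Real.exp (-x * Real.cosh t) * Real.cosh (v * t))
      ≤ Real.exp ((n + v + 1) ^ 2 / (2 * x)) * Real.exp (-t) := by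
  have h1 : Real.cosh t ^ n ≤ Real.exp ((n : ℝ) * t) := by
    calc Real.cosh t ^ n ≤ Real.exp t ^ n :=
          pow_le_pow_left₀ (Real.cosh_pos t).le (mycosh_le_exp ht) n
      _ = Real.exp ((n : ℝ) * t) := by rw [← Real.exp_nat_mul]
  have h2 : Real.cosh (v * t) ≤ Real.exp (v * t) := mycosh_le_exp (mul_nonneg hv ht)
  have key : (n : ℝ) * t + (v * t + -x * Real.cosh t) ≤ (n + v + 1) ^ 2 / (2 * x) - t := by
    have h3 : x * (1 + t ^ 2 / 2) ≤ x * Real.cosh t :=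
      mul_le_mul_of_nonneg_left (quad_le_cosh ht) hx.le
    have hq : ((n : ℝ) + v + 1) * t - x * (t ^ 2 / 2) ≤ (n + v + 1) ^ 2 / (2 * x) := by
      rw [le_div_iff₀ (by linarith : (0:ℝ) < 2 * x)]
      nlinarith [sq_nonneg ((n : ℝ) + v + 1 - x * t)]
    linarith
  calc Real.cosh t ^ n * (Real.exp (-x * Real.cosh t) * Real.cosh (v * t))
      ≤ Real.exp ((n : ℝ) * t) * (Real.exp (-x * Real.cosh t) * Real.exp (v * t)) := by
        apply mul_le_mul h1 _ (by positivity) (by positivity)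
        exact mul_le_mul_of_nonneg_left h2 (Real.exp_pos _).le
    _ = Real.exp ((n : ℝ) * t + (v * t + -x * Real.cosh t)) := by
        rw [Real.exp_add, Real.exp_add]; ring
    _ ≤ Real.exp ((n + v + 1) ^ 2 / (2 * x) - t) := Real.exp_le_exp.2 key
    _ = Real.exp ((n + v + 1) ^ 2 / (2 * x)) * Real.exp (-t) := by
        rw [← Real.exp_add]; ring_nf

private lemma integrable_J (v : ℝ) (hv : 0 ≤ v) (n : ℕ) {x : ℝ} (hx : 0 < x) :
    IntegrableOn
      (fun t => Real.cosh t ^ n * (Real.exp (-x * Real.cosh t) * Real.cosh (v * t)))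
      (Ioi 0) := by
  have hc : Continuous fun t : ℝ =>
      Real.cosh t ^ n * (Real.exp (-x * Real.cosh t) * Real.cosh (v * t)) := by
    fun_prop
  have hg : IntegrableOn
      (fun t : ℝ => Real.exp ((n + v + 1) ^ 2 / (2 * x)) * Real.exp (-t)) (Ioi 0) := by
    have := (exp_neg_integrableOn_Ioi 0 (by norm_num : (0:ℝ) < 1)).const_mul
      (Real.exp ((n + v + 1) ^ 2 / (2 * x)))
    simpa [IntegrableOn] using this
  refine Integrable.mono' hg hc.aestronglyMeasurable ?_
  filter_upwards [ae_restrict_mem measurableSet_Ioi] with t ht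
  rw [Real.norm_eq_abs, abs_of_nonneg (by positivity)]
  exact point_bound v hv n hx (le_of_lt ht)

noncomputable def Jb (v : ℝ) (n : ℕ) (x : ℝ) : ℝ :=
  ∫ t in Ioi (0:ℝ), Real.cosh t ^ n * (Real.exp (-x * Real.cosh t) * Real.cosh (v * t))


lemma J_pos (v : ℝ) (hv : 0 ≤ v) (n : ℕ) {x : ℝ} (hx : 0 < x) : 0 < Jb v n x := by
  rw [Jb, setIntegral_pos_iff_support_of_nonneg_ae]
  · have hsub : Ioi (0:ℝ) ⊆ Function.support
        (fun t => Real.cosh t ^ n * (Real.exp (-x * Real.cosh t) * Real.cosh (v * t))) ∩ Ioi 0 :=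
      fun t ht => ⟨ne_of_gt (by positivity), ht⟩
    refine lt_of_lt_of_le ?_ (measure_mono hsub)
    simp [Real.volume_Ioi]
  · filter_upwards with t
    positivity
  · exact integrable_J v hv n hx

lemma J_hasDeriv (v : ℝ) (hv : 0 ≤ v) (n : ℕ) {x : ℝ} (hx : 0 < x) :
    HasDerivAt (Jb v n) (-Jb v (n + 1) x) x := by
  have hmain := hasDerivAt_integral_of_dominated_loc_of_deriv_le
    (μ := volume.restrict (Ioi (0:ℝ))) (x₀ := x)
    (F := fun y t => Real.cosh t ^ n * (Real.exp (-y * Real.cosh t) * Real.cosh (v * t)))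
    (F' := fun y t => -(Real.cosh t ^ (n + 1) * (Real.exp (-y * Real.cosh t) * Real.cosh (v * t))))
    (bound := fun t => Real.cosh t ^ (n + 1) *
      (Real.exp (-(x / 2) * Real.cosh t) * Real.cosh (v * t)))
    (Metric.ball_mem_nhds x (half_pos hx)) ?_ ?_ ?_ ?_ ?_ ?_
  · have heq : -Jb v (n+1) x = ∫ t in Ioi (0:ℝ),
        -(Real.cosh t ^ (n+1) * (Real.exp (-x * Real.cosh t) * Real.cosh (v * t))) := by
      rw [Jb]; exact (integral_neg _).symm
    rw [heq]
    exact hmain.2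
  · filter_upwards with y
    exact (by fun_prop : Continuous fun t : ℝ =>
      Real.cosh t ^ n * (Real.exp (-y * Real.cosh t) * Real.cosh (v * t))).aestronglyMeasurable
  · exact (integrable_J v hv n hx)
  · exact (by fun_prop : Continuous fun t : ℝ =>
      -(Real.cosh t ^ (n+1) * (Real.exp (-x * Real.cosh t) * Real.cosh (v * t)))).aestronglyMeasurable
  · filter_upwards with t
    intro y hy
    rw [Metric.mem_ball, Real.dist_eq, abs_sub_lt_iff] at hy
    have hy2 : x / 2 ≤ y := by linarith [hy.2]
    rw [norm_neg, Real.norm_eq_abs, abs_of_nonneg (by positivity)]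
    have : Real.exp (-y * Real.cosh t) ≤ Real.exp (-(x/2) * Real.cosh t) := by
      apply Real.exp_le_exp.2
      have := (Real.cosh_pos t).le
      nlinarith
    gcongr
  · exact integrable_J v hv (n + 1) (half_pos hx)
  · filter_upwards with t
    intro y hy
    have h : HasDerivAt (fun y : ℝ => -y * Real.cosh t) (-Real.cosh t) y := by
      simpa using (hasDerivAt_id y).neg.mul_const (Real.cosh t)
    have h2 := (h.exp.mul_const (Real.cosh (v * t))).const_mul (Real.cosh t ^ n)
    refine h2.congr_deriv (Eq.symm ?_)
    rw [pow_succ]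
    ring

lemma J_le (v : ℝ) (hv : 0 ≤ v) {x : ℝ} (hx : 0 < x) : Jb v 0 x ≤ Jb v 1 x := by
  rw [Jb, Jb]
  apply setIntegral_mono_on (integrable_J v hv 0 hx) (integrable_J v hv 1 hx) measurableSet_Ioi
  intro t ht
  have h1 : (1:ℝ) ≤ Real.cosh t := Real.one_le_cosh t
  have h2 : (0:ℝ) < Real.exp (-x * Real.cosh t) * Real.cosh (v * t) := by positivity
  nlinarith




lemma J_ode (v : ℝ) (hv : 0 ≤ v) {x : ℝ} (hx : 0 < x) :
    x ^ 2 * Jb v 2 x = x * Jb v 1 x + (x ^ 2 + v ^ 2) * Jb v 0 x := by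
  set f : ℝ → ℝ := fun t =>
    -(Real.exp (-x * Real.cosh t) *
      (x * Real.sinh t * Real.cosh (v * t) + v * Real.sinh (v * t))) with hf
  set g : ℝ → ℝ := fun t =>
    (x ^ 2 * Real.cosh t ^ 2 - x * Real.cosh t - (x ^ 2 + v ^ 2)) *
      (Real.exp (-x * Real.cosh t) * Real.cosh (v * t)) with hg
  have hderiv : ∀ t : ℝ, HasDerivAt f (g t) t := by
    intro t
    have hu : HasDerivAt (fun t : ℝ => Real.exp (-x * Real.cosh t))
        (Real.exp (-x * Real.cosh t) * (-x * Real.sinh t)) t :=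
      ((Real.hasDerivAt_cosh t).const_mul (-x)).exp
    have hvt : HasDerivAt (fun t : ℝ => v * t) v t := by
      simpa using (hasDerivAt_id t).const_mul v
    have hw : HasDerivAt (fun t : ℝ =>
        x * Real.sinh t * Real.cosh (v * t) + v * Real.sinh (v * t))
        ((x * Real.cosh t) * Real.cosh (v * t)
          + (x * Real.sinh t) * (Real.sinh (v * t) * v)
          + v * (Real.cosh (v * t) * v)) t := by
      exact (((Real.hasDerivAt_sinh t).const_mul x).mul hvt.cosh).add (hvt.sinh.const_mul v)
    have h2 := (hu.mul hw).neg
    refine h2.congr_deriv (Eq.symm ?_)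
    have hs : Real.sinh t ^ 2 = Real.cosh t ^ 2 - 1 := by
      have := Real.cosh_sq t
      linarith
    rw [hg]
    linear_combination (-(Real.exp (-x * Real.cosh t) * Real.cosh (v * t) * x ^ 2)) * hs
  have hcont : ContinuousWithinAt f (Ici 0) 0 := by
    apply Continuous.continuousWithinAt
    fun_prop
  have hi2 := integrable_J v hv 2 hx
  have hi1 := integrable_J v hv 1 hx
  have hi0 := integrable_J v hv 0 hx
  have hgeq : g = fun t =>
      x ^ 2 * (Real.cosh t ^ 2 * (Real.exp (-x * Real.cosh t) * Real.cosh (v * t)))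
      - x * (Real.cosh t ^ 1 * (Real.exp (-x * Real.cosh t) * Real.cosh (v * t)))
      - (x ^ 2 + v ^ 2) * (Real.cosh t ^ 0 * (Real.exp (-x * Real.cosh t) * Real.cosh (v * t))) := by
    funext t
    rw [hg]
    ring
  have hint : IntegrableOn g (Ioi 0) := by
    rw [hgeq]
    exact ((hi2.const_mul _).sub (hi1.const_mul _)).sub (hi0.const_mul _)
  have htend : Tendsto f atTop (𝓝 0) := by
    have hbound : ∀ᶠ t in atTop, ‖f t‖ ≤
        (x * Real.exp ((1 + v + 1) ^ 2 / (2 * x)) + v * Real.exp ((0 + v + 1) ^ 2 / (2 * x)))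
          * Real.exp (-t) := by
      filter_upwards [eventually_ge_atTop (0:ℝ)] with t ht
      have hs1 : Real.sinh t ≤ Real.cosh t := (Real.sinh_lt_cosh t).le
      have hs2 : Real.sinh (v * t) ≤ Real.cosh (v * t) := (Real.sinh_lt_cosh _).le
      have hsn : 0 ≤ Real.sinh t := Real.sinh_nonneg_iff.2 ht
      have hsn2 : 0 ≤ Real.sinh (v * t) := Real.sinh_nonneg_iff.2 (mul_nonneg hv ht)
      have hE : 0 < Real.exp (-x * Real.cosh t) := Real.exp_pos _
      have hc : 0 < Real.cosh (v * t) := Real.cosh_pos _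
      have hb1 := point_bound v hv 1 hx ht
      have hb0 := point_bound v hv 0 hx ht
      rw [hf, Real.norm_eq_abs, abs_neg, abs_of_nonneg (by positivity)]
      calc Real.exp (-x * Real.cosh t) *
            (x * Real.sinh t * Real.cosh (v * t) + v * Real.sinh (v * t))
          ≤ x * (Real.cosh t ^ 1 * (Real.exp (-x * Real.cosh t) * Real.cosh (v * t)))
            + v * (Real.cosh t ^ 0 * (Real.exp (-x * Real.cosh t) * Real.cosh (v * t))) := by
            rw [pow_one, pow_zero, one_mul]
            nlinarith [mul_nonneg (mul_nonneg (mul_nonneg hx.le hE.le) hc.le)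
                (sub_nonneg.2 hs1),
              mul_nonneg (mul_nonneg hv hE.le) (sub_nonneg.2 hs2)]
        _ ≤ x * (Real.exp ((1 + v + 1) ^ 2 / (2 * x)) * Real.exp (-t))
            + v * (Real.exp ((0 + v + 1) ^ 2 / (2 * x)) * Real.exp (-t)) := by
            have h1 := mul_le_mul_of_nonneg_left hb1 hx.le
            have h0 := mul_le_mul_of_nonneg_left hb0 hv
            push_cast at h1 h0
            linarith
        _ = (x * Real.exp ((1 + v + 1) ^ 2 / (2 * x))
            + v * Real.exp ((0 + v + 1) ^ 2 / (2 * x))) * Real.exp (-t) := by ring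
    have htend0 : Tendsto (fun t : ℝ =>
        (x * Real.exp ((1 + v + 1) ^ 2 / (2 * x)) + v * Real.exp ((0 + v + 1) ^ 2 / (2 * x)))
          * Real.exp (-t)) atTop (𝓝 0) := by
      have h0 : Tendsto (fun t : ℝ => Real.exp (-t)) atTop (𝓝 0) :=
        Real.tendsto_exp_neg_atTop_nhds_zero
      simpa using h0.const_mul
        (x * Real.exp ((1 + v + 1) ^ 2 / (2 * x)) + v * Real.exp ((0 + v + 1) ^ 2 / (2 * x)))
    exact squeeze_zero_norm' hbound htend0
  have hFTC := integral_Ioi_of_hasDerivAt_of_tendsto hcont (fun t _ => hderiv t) hint htend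
  have hf0 : f 0 = 0 := by rw [hf]; simp
  rw [hf0, sub_zero] at hFTC
  have hlin : ∫ t in Ioi (0:ℝ), g t =
      x ^ 2 * Jb v 2 x - x * Jb v 1 x - (x ^ 2 + v ^ 2) * Jb v 0 x := by
    simp only [hgeq]
    have H2 : IntegrableOn (fun t : ℝ =>
        x ^ 2 * (Real.cosh t ^ 2 * (Real.exp (-x * Real.cosh t) * Real.cosh (v * t)))) (Ioi 0) :=
      hi2.const_mul _
    have H1 : IntegrableOn (fun t : ℝ =>
        x * (Real.cosh t ^ 1 * (Real.exp (-x * Real.cosh t) * Real.cosh (v * t)))) (Ioi 0) :=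
      hi1.const_mul _
    have H0 : IntegrableOn (fun t : ℝ =>
        (x ^ 2 + v ^ 2) * (Real.cosh t ^ 0 * (Real.exp (-x * Real.cosh t) * Real.cosh (v * t))))
        (Ioi 0) := hi0.const_mul _
    have H21 : IntegrableOn (fun t : ℝ =>
        x ^ 2 * (Real.cosh t ^ 2 * (Real.exp (-x * Real.cosh t) * Real.cosh (v * t)))
          - x * (Real.cosh t ^ 1 * (Real.exp (-x * Real.cosh t) * Real.cosh (v * t))))
        (Ioi 0) := H2.sub H1
    rw [integral_sub H21 H0, integral_sub H2 H1,
        integral_const_mul, integral_const_mul, integral_const_mul, Jb, Jb, Jb]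
  rw [hFTC] at hlin
  linarith

lemma stay_above {f : ℝ → ℝ} {x₀ c : ℝ}
    (hcont : ∀ y, x₀ ≤ y → ContinuousAt f y)
    (h0 : c ≤ f x₀)
    (hcross : ∀ y, x₀ ≤ y → f y = c → ∃ d, 0 < d ∧ HasDerivAt f d y) :
    ∀ x, x₀ ≤ x → c ≤ f x := by
  by_contra hcon
  push_neg at hcon
  obtain ⟨x, hxx, hfx⟩ := hcon
  set S : Set ℝ := {y | x₀ ≤ y ∧ f y < c} with hS
  have hSne : S.Nonempty := ⟨x, hxx, hfx⟩
  have hSbd : BddBelow S := ⟨x₀, fun y hy => hy.1⟩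
  set z := sInf S with hz
  have hzx₀ : x₀ ≤ z := le_csInf hSne fun y hy => hy.1
  have hconOn : ContinuousOn f (Ici x₀) := fun y hy => (hcont y hy).continuousWithinAt
  have hcl : IsClosed (Ici x₀ ∩ f ⁻¹' Iic c) :=
    hconOn.preimage_isClosed_of_isClosed isClosed_Ici isClosed_Iic
  have hzmem : z ∈ Ici x₀ ∩ f ⁻¹' Iic c := by
    have h1 : z ∈ closure S := csInf_mem_closure hSne hSbd
    exact closure_minimal (fun y hy => mem_inter hy.1 (le_of_lt hy.2)) hcl h1
  have hfzle : f z ≤ c := hzmem.2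
  have hfzge : c ≤ f z := by
    rcases eq_or_lt_of_le hzx₀ with h | h
    · rw [← h]; exact h0
    · refine ge_of_tendsto (((hcont z hzx₀).tendsto).mono_left
        (nhdsWithin_le_nhds (s := Iio z))) ?_
      have hmem : Ici x₀ ∈ 𝓝[<] z := mem_nhdsWithin_of_mem_nhds (Ici_mem_nhds h)
      filter_upwards [hmem, self_mem_nhdsWithin] with y hy1 hy2
      by_contra hlt
      push_neg at hlt
      have hyS : y ∈ S := ⟨hy1, hlt⟩
      exact absurd (csInf_le hSbd hyS) (not_le.2 hy2)
  have hfz : f z = c := le_antisymm hfzle hfzge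
  obtain ⟨d, hd0, hd⟩ := hcross z hzx₀ hfz
  have hslope : Tendsto (slope f z) (𝓝[≠] z) (𝓝 d) := hasDerivAt_iff_tendsto_slope.1 hd
  have hev : ∀ᶠ y in 𝓝[>] z, 0 < slope f z y :=
    (hslope.mono_left (nhdsWithin_mono _ fun y hy => ne_of_gt hy)).eventually
      (eventually_gt_nhds hd0)
  have hev2 : ∀ᶠ y in 𝓝[>] z, c < f y := by
    filter_upwards [hev, self_mem_nhdsWithin] with y hy hy2
    rw [slope_def_field] at hy
    have h5 : (0:ℝ) < y - z := sub_pos.2 hy2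
    have h4 : 0 < f y - f z := by
      have := div_pos_iff.1 hy
      rcases this with ⟨h6, _⟩ | ⟨_, h7⟩
      · linarith
      · linarith
    rw [hfz] at h4
    linarith
  obtain ⟨u, hu, hub⟩ := mem_nhdsGT_iff_exists_Ioc_subset.1 hev2
  obtain ⟨s, hsS, hsu⟩ := (csInf_lt_iff hSbd hSne).1 (show sInf S < u from hz ▸ hu)
  have hsz : z ≤ s := csInf_le hSbd hsS
  have hsnez : s ≠ z := by
    intro h
    rw [h] at hsS
    exact absurd hfz (ne_of_lt hsS.2)
  have hmem2 : s ∈ Ioc z u := ⟨lt_of_le_of_ne hsz (Ne.symm hsnez), le_of_lt hsu⟩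
  exact absurd hsS.2 (not_lt.2 (le_of_lt (hub hmem2)))

lemma main_ineq (v : ℝ) (hv0 : 0 ≤ v) (hv : v ≠ 1 / 2) (L : ℝ → ℝ)
    (hL : ∀ y, 0 < y → HasDerivAt L ((v ^ 2 - L y ^ 2) / y + 2 * L y + 1) y)
    (hL0 : ∀ y, 0 < y → L y ≤ 0) :
    ∀ x, 0 < x → -max v (1 / 2) < L x ∧ L x < -min v (1 / 2) := by
  have claim2 : ∀ x, 0 < x → L x < -min v (1 / 2) := by
    intro x₀ hx₀
    by_contra hcon
    push_neg at hcon
    set m := min v (1 / 2) with hm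
    have hm0 : 0 ≤ m := le_min hv0 (by norm_num)
    have hmv : m ≤ v := min_le_left _ _
    have hmh : m ≤ 1 / 2 := min_le_right _ _
    set ee := 1 - 2 * m with hee_def
    set cc := v ^ 2 - m ^ 2 with hcc_def
    have hee : 0 ≤ ee := by rw [hee_def]; linarith
    have hcc : 0 ≤ cc := by rw [hcc_def]; nlinarith
    have hpos : 0 < ee ∨ 0 < cc := by
      rcases lt_or_gt_of_ne hv with h | h
      · left; rw [hee_def, hm, min_eq_left h.le]; linarith
      · right; rw [hcc_def, hm, min_eq_right h.le]; nlinarith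
    have hA : ∀ y, x₀ ≤ y → -m ≤ L y := by
      apply stay_above
      · intro y hy; exact (hL y (lt_of_lt_of_le hx₀ hy)).continuousAt
      · exact hcon
      · intro y hy hLy
        have hy0 : 0 < y := lt_of_lt_of_le hx₀ hy
        refine ⟨cc / y + ee, ?_, ?_⟩
        · rcases hpos with h | h
          · have h1 : 0 ≤ cc / y := div_nonneg hcc hy0.le
            linarith
          · have h1 : 0 < cc / y := div_pos h hy0
            linarith
        · have h2 := hL y hy0
          convert h2 using 1
          rw [hLy, hcc_def, hee_def]
          ring
    -- monotonicity of the auxiliary function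
    have hder : ∀ y, 0 < y → HasDerivAt (fun y => L y - (ee * y + cc * Real.log y))
        ((v ^ 2 - L y ^ 2) / y + 2 * L y + 1 - (ee + cc * y⁻¹)) y := by
      intro y hy0
      have h1 : HasDerivAt (fun y : ℝ => ee * y + cc * Real.log y) (ee + cc * y⁻¹) y := by
        have := ((hasDerivAt_id y).const_mul ee).add
          ((Real.hasDerivAt_log hy0.ne').const_mul cc)
        exact this.congr_deriv (by ring)
      exact (hL y hy0).sub h1
    have hmono : MonotoneOn (fun y => L y - (ee * y + cc * Real.log y)) (Ici x₀) := by
      apply monotoneOn_of_deriv_nonneg (convex_Ici x₀)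
      · intro y hy
        exact ((hder y (lt_of_lt_of_le hx₀ hy)).continuousAt).continuousWithinAt
      · intro y hy
        rw [interior_Ici] at hy
        exact ((hder y (lt_trans hx₀ hy)).differentiableAt).differentiableWithinAt
      · intro y hy
        rw [interior_Ici] at hy
        have hy0 : 0 < y := lt_trans hx₀ hy
        rw [(hder y hy0).deriv]
        have hLy1 : -m ≤ L y := hA y hy.le
        have hLy2 : L y ≤ 0 := hL0 y hy0
        have hnum : cc ≤ v ^ 2 - L y ^ 2 := by rw [hcc_def]; nlinarith
        have h3 : cc / y ≤ (v ^ 2 - L y ^ 2) / y := by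
          rw [div_eq_mul_inv, div_eq_mul_inv]
          exact mul_le_mul_of_nonneg_right hnum (inv_nonneg.2 hy0.le)
        have h4 : ee ≤ 2 * L y + 1 := by rw [hee_def]; linarith
        have h5 : cc * y⁻¹ = cc / y := by rw [div_eq_mul_inv]
        linarith
    -- contradiction via growth
    rcases hpos with hE | hC
    · set x₁ := x₀ + (m + 1) / ee with hx₁_def
      have hx₁ : x₀ ≤ x₁ := le_add_of_nonneg_right (div_nonneg (by linarith) hee)
      have h6 := hmono self_mem_Ici (mem_Ici.2 hx₁) hx₁
      have hlog : Real.log x₀ ≤ Real.log x₁ := Real.log_le_log hx₀ hx₁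
      have hLx₁ : L x₁ ≤ 0 := hL0 x₁ (lt_of_lt_of_le hx₀ hx₁)
      have hee' : ee * ((m + 1) / ee) = m + 1 := mul_div_cancel₀ _ (ne_of_gt hE)
      have h7 : ee * x₁ = ee * x₀ + (m + 1) := by rw [hx₁_def, mul_add, hee']
      simp only [] at h6
      nlinarith [mul_nonneg hcc (sub_nonneg.2 hlog)]
    · set x₁ := x₀ * Real.exp ((m + 1) / cc) with hx₁_def
      have hx₁pos : 0 < x₁ := mul_pos hx₀ (Real.exp_pos _)
      have hexp1 : 1 ≤ Real.exp ((m + 1) / cc) :=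
        Real.one_le_exp (div_nonneg (by linarith) hcc)
      have hx₁ : x₀ ≤ x₁ := le_mul_of_one_le_right hx₀.le hexp1
      have h6 := hmono self_mem_Ici (mem_Ici.2 hx₁) hx₁
      have hlog : Real.log x₁ = Real.log x₀ + (m + 1) / cc := by
        rw [hx₁_def, Real.log_mul hx₀.ne' (Real.exp_ne_zero _), Real.log_exp]
      have hcc' : cc * Real.log x₁ = cc * Real.log x₀ + (m + 1) := by
        rw [hlog, mul_add, mul_div_cancel₀ _ (ne_of_gt hC)]
      have hLx₁ : L x₁ ≤ 0 := hL0 x₁ hx₁pos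
      simp only [] at h6
      nlinarith [mul_nonneg hee (sub_nonneg.2 hx₁)]
  have claim1 : ∀ x, 0 < x → -max v (1 / 2) < L x := by
    intro x₀ hx₀
    by_contra hcon
    push_neg at hcon
    set M := max v (1 / 2) with hM
    have hM12 : 1 / 2 ≤ M := le_max_right _ _
    have hMv : v ≤ M := le_max_left _ _
    have hM0 : 0 < M := by linarith
    set ee := 2 * M - 1 with hee_def
    set cc := M ^ 2 - v ^ 2 with hcc_def
    have hee : 0 ≤ ee := by rw [hee_def]; linarith
    have hcc : 0 ≤ cc := by rw [hcc_def]; nlinarith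
    have hpos : 0 < ee ∨ 0 < cc := by
      rcases lt_or_gt_of_ne hv with h | h
      · right; rw [hcc_def, hM, max_eq_right h.le]; nlinarith
      · left; rw [hee_def, hM, max_eq_left h.le]; linarith
    -- L stays below -M
    have hA : ∀ y, x₀ ≤ y → M ≤ -L y := by
      apply stay_above
      · intro y hy; exact ((hL y (lt_of_lt_of_le hx₀ hy)).continuousAt).neg
      · linarith
      · intro y hy hLy
        have hy0 : 0 < y := lt_of_lt_of_le hx₀ hy
        have hLy' : L y = -M := by linarith
        refine ⟨cc / y + ee, ?_, ?_⟩
        · rcases hpos with h | h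
          · have h1 : 0 ≤ cc / y := div_nonneg hcc hy0.le
            linarith
          · have h1 : 0 < cc / y := div_pos h hy0
            linarith
        · have h2 := (hL y hy0).neg
          refine h2.congr_deriv (Eq.symm ?_)
          rw [hLy', hcc_def, hee_def]
          ring
    -- decay of L
    have hder : ∀ y, 0 < y → HasDerivAt (fun y => L y + (ee * y + cc * Real.log y))
        ((v ^ 2 - L y ^ 2) / y + 2 * L y + 1 + (ee + cc * y⁻¹)) y := by
      intro y hy0
      have h1 : HasDerivAt (fun y : ℝ => ee * y + cc * Real.log y) (ee + cc * y⁻¹) y := by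
        have := ((hasDerivAt_id y).const_mul ee).add
          ((Real.hasDerivAt_log hy0.ne').const_mul cc)
        exact this.congr_deriv (by ring)
      exact (hL y hy0).add h1
    have hanti : AntitoneOn (fun y => L y + (ee * y + cc * Real.log y)) (Ici x₀) := by
      apply antitoneOn_of_deriv_nonpos (convex_Ici x₀)
      · intro y hy
        exact ((hder y (lt_of_lt_of_le hx₀ hy)).continuousAt).continuousWithinAt
      · intro y hy
        rw [interior_Ici] at hy
        exact ((hder y (lt_trans hx₀ hy)).differentiableAt).differentiableWithinAt
      · intro y hy
        rw [interior_Ici] at hy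
        have hy0 : 0 < y := lt_trans hx₀ hy
        rw [(hder y hy0).deriv]
        have hLy1 : M ≤ -L y := hA y hy.le
        have hnum : v ^ 2 - L y ^ 2 ≤ -cc := by rw [hcc_def]; nlinarith
        have h3 : (v ^ 2 - L y ^ 2) / y ≤ -cc / y := by
          rw [div_eq_mul_inv, div_eq_mul_inv]
          exact mul_le_mul_of_nonneg_right hnum (inv_nonneg.2 hy0.le)
        have h4 : 2 * L y + 1 ≤ -ee := by rw [hee_def]; linarith
        have h5 : cc * y⁻¹ = cc / y := by rw [div_eq_mul_inv]
        have h6 : -cc / y = -(cc / y) := by ring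
        linarith [h3, h4]
    -- find x₁ with L x₁ ≤ -(2v+2)
    set R := 2 * v + 2 with hR_def
    have hR0 : 0 < R := by rw [hR_def]; linarith
    have hx₁ : ∃ x₁, x₀ ≤ x₁ ∧ L x₁ ≤ -R := by
      rcases hpos with hE | hC
      · refine ⟨x₀ + R / ee, le_add_of_nonneg_right (div_nonneg hR0.le hee), ?_⟩
        set x₁ := x₀ + R / ee
        have hx₁ : x₀ ≤ x₁ := le_add_of_nonneg_right (div_nonneg hR0.le hee)
        have h6 := hanti self_mem_Ici (mem_Ici.2 hx₁) hx₁
        have hlog : Real.log x₀ ≤ Real.log x₁ := Real.log_le_log hx₀ hx₁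
        have hee' : ee * (R / ee) = R := mul_div_cancel₀ _ (ne_of_gt hE)
        have h7 : ee * x₁ = ee * x₀ + R := by rw [mul_add, hee']
        simp only [] at h6
        nlinarith [mul_nonneg hcc (sub_nonneg.2 hlog)]
      · refine ⟨x₀ * Real.exp (R / cc), le_mul_of_one_le_right hx₀.le
          (Real.one_le_exp (div_nonneg hR0.le hcc)), ?_⟩
        set x₁ := x₀ * Real.exp (R / cc)
        have hx₁ : x₀ ≤ x₁ := le_mul_of_one_le_right hx₀.le
          (Real.one_le_exp (div_nonneg hR0.le hcc))
        have h6 := hanti self_mem_Ici (mem_Ici.2 hx₁) hx₁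
        have hlog : Real.log x₁ = Real.log x₀ + R / cc := by
          rw [Real.log_mul hx₀.ne' (Real.exp_ne_zero _), Real.log_exp]
        have hcc' : cc * Real.log x₁ = cc * Real.log x₀ + R := by
          rw [hlog, mul_add, mul_div_cancel₀ _ (ne_of_gt hC)]
        simp only [] at h6
        nlinarith [mul_nonneg hee (sub_nonneg.2 hx₁)]
    obtain ⟨x₁, hx₁ge, hx₁le⟩ := hx₁
    have hx₁0 : 0 < x₁ := lt_of_lt_of_le hx₀ hx₁ge
    -- L stays below -R afterwards
    have hC2 : ∀ y, x₁ ≤ y → R ≤ -L y := by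
      apply stay_above
      · intro y hy; exact ((hL y (lt_of_lt_of_le hx₁0 hy)).continuousAt).neg
      · linarith
      · intro y hy hLy
        have hy0 : 0 < y := lt_of_lt_of_le hx₁0 hy
        have hLy' : L y = -R := by linarith
        refine ⟨(R ^ 2 - v ^ 2) / y + (2 * R - 1), ?_, ?_⟩
        · have h1 : 0 < (R ^ 2 - v ^ 2) / y := div_pos (by rw [hR_def]; nlinarith) hy0
          have h2 : 0 < 2 * R - 1 := by rw [hR_def]; linarith
          linarith
        · have h2 := (hL y hy0).neg
          refine h2.congr_deriv (Eq.symm ?_)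
          rw [hLy']
          ring
    -- blow-up of 1/L : monotone w
    have hwder : ∀ y, x₁ ≤ y → HasDerivAt (fun y => (L y)⁻¹ - 1 / 2 * Real.log y)
        (-((v ^ 2 - L y ^ 2) / y + 2 * L y + 1) / L y ^ 2 - 1 / 2 * y⁻¹) y := by
      intro y hy
      have hy0 : 0 < y := lt_of_lt_of_le hx₁0 hy
      have hne : L y ≠ 0 := by
        have := hC2 y hy
        intro h
        rw [h] at this
        simp at this
        linarith
      have h1 := (hL y hy0).inv hne
      have h2 := (Real.hasDerivAt_log hy0.ne').const_mul (1 / 2 : ℝ)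
      exact h1.sub h2
    have hwmono : MonotoneOn (fun y => (L y)⁻¹ - 1 / 2 * Real.log y) (Ici x₁) := by
      apply monotoneOn_of_deriv_nonneg (convex_Ici x₁)
      · intro y hy
        exact ((hwder y hy).continuousAt).continuousWithinAt
      · intro y hy
        rw [interior_Ici] at hy
        exact ((hwder y hy.le).differentiableAt).differentiableWithinAt
      · intro y hy
        rw [interior_Ici] at hy
        have hy0 : 0 < y := lt_of_lt_of_le hx₁0 hy.le
        rw [(hwder y hy.le).deriv]
        have hRy : R ≤ -L y := hC2 y hy.le
        have hLyneg : L y ≤ -R := by linarith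
        have hLsq : 0 < L y ^ 2 := by nlinarith
        have h1 : v ^ 2 - L y ^ 2 ≤ -(L y ^ 2 / 2) := by nlinarith
        have h2 : (v ^ 2 - L y ^ 2) / y ≤ -(L y ^ 2 / 2) / y := by
          rw [div_eq_mul_inv, div_eq_mul_inv]
          exact mul_le_mul_of_nonneg_right h1 (inv_nonneg.2 hy0.le)
        have h3 : 2 * L y + 1 ≤ 0 := by linarith
        have hDle : (v ^ 2 - L y ^ 2) / y + 2 * L y + 1 ≤ -(L y ^ 2 / 2) / y := by
          have h2' : -(L y ^ 2 / 2) / y = -(L y ^ 2 / 2 / y) := by ring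
          linarith
        have h4 : L y ^ 2 / 2 / y * (L y ^ 2)⁻¹
            ≤ -((v ^ 2 - L y ^ 2) / y + 2 * L y + 1) * (L y ^ 2)⁻¹ := by
          apply mul_le_mul_of_nonneg_right _ (inv_nonneg.2 hLsq.le)
          have h2' : -(L y ^ 2 / 2) / y = -(L y ^ 2 / 2 / y) := by ring
          linarith
        have h5 : L y ^ 2 / 2 / y * (L y ^ 2)⁻¹ = 1 / 2 * y⁻¹ := by
          have hLne : L y ≠ 0 := (by linarith : L y < 0).ne
          field_simp
        have h6 : -((v ^ 2 - L y ^ 2) / y + 2 * L y + 1) / L y ^ 2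
            = -((v ^ 2 - L y ^ 2) / y + 2 * L y + 1) * (L y ^ 2)⁻¹ := by
          rw [div_eq_mul_inv]
        linarith
    -- final contradiction
    set x₂ := x₁ * Real.exp (2 * R⁻¹ + 1) with hx₂_def
    have hx₂ : x₁ ≤ x₂ := le_mul_of_one_le_right hx₁0.le
      (Real.one_le_exp (by linarith [inv_nonneg.2 hR0.le]))
    have h6 := hwmono self_mem_Ici (mem_Ici.2 hx₂) hx₂
    have hlog : Real.log x₂ = Real.log x₁ + (2 * R⁻¹ + 1) := by
      rw [hx₂_def, Real.log_mul hx₁0.ne' (Real.exp_ne_zero _), Real.log_exp]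
    have hinv1 : -R⁻¹ ≤ (L x₁)⁻¹ := by
      have h7 : (-L x₁)⁻¹ ≤ R⁻¹ := inv_anti₀ hR0 (by linarith [hC2 x₁ le_rfl])
      rw [inv_neg] at h7
      linarith
    have hRR : R * R⁻¹ = 1 := mul_inv_cancel₀ hR0.ne'
    have hinv2 : (L x₂)⁻¹ < 0 := inv_lt_zero.2 (by linarith [hC2 x₂ hx₂])
    simp only [] at h6
    linarith
  intro x hx
  exact ⟨claim1 x hx, claim2 x hx⟩




theorem stmt_16 (v : ℝ) (hv0 : 0 ≤ v) (hv : v ≠ 1 / 2)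
    (K : ℝ → ℝ)
    (hK : ∀ x, K x = ∫ t in Ioi (0 : ℝ), Real.exp (-x * Real.cosh t) * Real.cosh (v * t)) :
    ∀ x > (0 : ℝ),
      -x - max v (1 / 2) < x * deriv K x / K x ∧
      x * deriv K x / K x < -x - min v (1 / 2) := by
  have hKJ : K = Jb v 0 := by
    funext y
    rw [hK y, Jb]
    congr 1
    funext t
    rw [pow_zero, one_mul]
  have hderivK : ∀ z, 0 < z → deriv K z = -Jb v 1 z := by
    intro z hz
    rw [hKJ]
    exact (J_hasDeriv v hv0 0 hz).deriv
  set L : ℝ → ℝ := fun y => y * deriv K y / K y + y with hLdef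
  have hLeq : ∀ z, 0 < z → L z = z * -Jb v 1 z / Jb v 0 z + z := by
    intro z hz
    rw [hLdef]
    simp only []
    rw [hderivK z hz, hKJ]
  have hLder : ∀ y, 0 < y → HasDerivAt L ((v ^ 2 - L y ^ 2) / y + 2 * L y + 1) y := by
    intro y hy
    have h0 := J_hasDeriv v hv0 0 hy
    have h1 := J_hasDeriv v hv0 1 hy
    have hJ0 := J_pos v hv0 0 hy
    have hne : Jb v 0 y ≠ 0 := hJ0.ne'
    have hstep : HasDerivAt (fun z => z * -Jb v 1 z / Jb v 0 z + z)
        (((1 * -Jb v 1 y + y * -(-Jb v 2 y)) * Jb v 0 y - y * -Jb v 1 y * -Jb v 1 y)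
          / Jb v 0 y ^ 2 + 1) y :=
      (((hasDerivAt_id y).mul h1.neg).div h0 hne).add (hasDerivAt_id y)
    have heq : L =ᶠ[𝓝 y] fun z => z * -Jb v 1 z / Jb v 0 z + z := by
      filter_upwards [Ioi_mem_nhds hy] with z hz
      exact hLeq z hz
    have hfinal := hstep.congr_of_eventuallyEq heq
    refine hfinal.congr_deriv (Eq.symm ?_)
    rw [hLeq y hy]
    have hode := J_ode v hv0 hy
    field_simp
    linear_combination (-(Jb v 0 y)) * hode
  have hL0 : ∀ y, 0 < y → L y ≤ 0 := by
    intro y hy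
    rw [hLeq y hy]
    have h01 := J_le v hv0 hy
    have hp := J_pos v hv0 0 hy
    have heq2 : y * -Jb v 1 y / Jb v 0 y + y = y * (Jb v 0 y - Jb v 1 y) / Jb v 0 y := by
      field_simp
      ring
    rw [heq2]
    have hnum : y * (Jb v 0 y - Jb v 1 y) ≤ 0 := by nlinarith
    exact div_nonpos_iff.2 (Or.inr ⟨hnum, hp.le⟩)
  intro x hx
  have hmain := main_ineq v hv0 hv L hLder hL0 x hx
  have hval : L x = x * deriv K x / K x + x := rfl
  constructor
  · linarith [hmain.1]
  · linarith [hmain.2]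
end
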